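/- arXiv:2012.14121 — 15 statements merged into one kernel-verified Lean document; each statement's English description precedes it below -/
import Mathlib

section
/- Let K be a nonempty set and f, g : K → [0,∞) with g⁻¹(0) ⊆ f⁻¹(0). If for every ε > 0 there exists δ > 0 such that x ∈ K and ε ≤ g(x) < ε + δ imply f(x) < ε, then for every ε > 0 there exists δ > 0 such that x ∈ K and g(x) < ε + δ imply f(x) < ε. -/
open scoped NNReal ENNReal

theorem MK_implies_strong {K : Type*} [Nonempty K] (f g : K → ℝ≥0)
    (h0 : ∀ x, g x = 0 → f x = 0)
    (hMK : ∀ ε : ℝ≥0, 0 < ε → ∃ δ : ℝ≥0, 0 < δ ∧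
      ∀ x, ε ≤ g x → g x < ε + δ → f x < ε) :
    ∀ ε : ℝ≥0, 0 < ε → ∃ δ : ℝ≥0, 0 < δ ∧ ∀ x, g x < ε + δ → f x < ε := by
  -- key: f x < g x whenever 0 < g x
  have key : ∀ x, 0 < g x → f x < g x := by
    intro x hx
    obtain ⟨δ, hδ, h⟩ := hMK (g x) hx
    exact h x le_rfl (lt_add_of_pos_right _ hδ)
  intro ε hε
  obtain ⟨δ, hδ, h⟩ := hMK ε hε
  refine ⟨δ, hδ, fun x hx => ?_⟩
  rcases le_or_gt ε (g x) with hle | hlt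
  · exact h x hle hx
  · rcases eq_or_lt_of_le (zero_le (a := g x)) with h0x | h0x
    · rw [h0 x h0x.symm]; exact hε
    · exact (key x h0x).trans hlt
end

section
/- Let K be a nonempty set and f, g : K → [0,∞). If for every ε > 0 there exists δ > 0 such that x ∈ K and g(x) < ε + δ imply f(x) < ε, then there exists a nondecreasing function γ : [0,∞) → [0,∞] with γ(s) > s for all s > 0 and γ(f(x)) ≤ g(x) for all x ∈ K. -/
open scoped NNReal ENNReal

theorem strong_implies_gamma {K : Type*} [Nonempty K] (f g : K → ℝ≥0)
    (h : ∀ ε : ℝ≥0, 0 < ε → ∃ δ : ℝ≥0, 0 < δ ∧ ∀ x, g x < ε + δ → f x < ε) :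
    ∃ γ : ℝ≥0 → ℝ≥0∞, Monotone γ ∧ (∀ s : ℝ≥0, 0 < s → (s : ℝ≥0∞) < γ s) ∧
      ∀ x, γ (f x) ≤ (g x : ℝ≥0∞) := by
  refine ⟨fun s => ⨅ (x : K) (_ : s ≤ f x), (g x : ℝ≥0∞), ?_, ?_, ?_⟩
  · intro s t hst
    exact le_iInf₂ fun x hx => iInf₂_le x (hst.trans hx)
  · intro s hs
    by_contra hle
    push_neg at hle
    obtain ⟨δ, hδ, hδ'⟩ := h s hs
    have hlt : (⨅ (x : K) (_ : s ≤ f x), (g x : ℝ≥0∞)) < (s + δ : ℝ≥0) := by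
      refine hle.trans_lt ?_
      exact_mod_cast lt_add_of_pos_right s hδ
    simp only [iInf_lt_iff] at hlt
    obtain ⟨x, hsf, hgx⟩ := hlt
    have : g x < s + δ := by exact_mod_cast hgx
    exact absurd (hδ' x this) (not_lt.2 hsf)
  · intro x
    exact iInf₂_le x (le_refl (f x))
end

section
/- Let K be a nonempty set and f, g : K → [0,∞). If there exists a nondecreasing function γ : [0,∞) → [0,∞] with γ(s) > s for all s > 0 and γ(f(x)) ≤ g(x) for all x ∈ K, then there exists a function w : [0,∞) → [0,∞) with w(s) > s for all s > 0, w right lower semicontinuous on (0,∞), and w(f(x)) ≤ g(x) for all x ∈ K. -/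
open scoped NNReal ENNReal

theorem gamma_implies_wong {K : Type*} [Nonempty K] (f g : K → ℝ≥0)
    (h : ∃ γ : ℝ≥0 → ℝ≥0∞, Monotone γ ∧ (∀ s : ℝ≥0, 0 < s → (s : ℝ≥0∞) < γ s) ∧
      ∀ x, γ (f x) ≤ (g x : ℝ≥0∞)) :
    ∃ w : ℝ≥0 → ℝ≥0, (∀ s : ℝ≥0, 0 < s → s < w s) ∧
      (∀ t₀ : ℝ≥0, 0 < t₀ → ∀ ε : ℝ≥0, 0 < ε →
        ∃ δ : ℝ≥0, 0 < δ ∧ ∀ s, t₀ ≤ s → s < t₀ + δ → w t₀ < w s + ε) ∧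
      ∀ x, w (f x) ≤ g x := by
  obtain ⟨γ, hmono, hgt, hle⟩ := h
  refine ⟨fun t => (min (γ t) (t + 1)).toNNReal, ?_, ?_, ?_⟩
  · intro s hs
    have hne : min (γ s) ((s : ℝ≥0∞) + 1) ≠ ⊤ :=
      ne_top_of_le_ne_top (by simp) (min_le_right _ _)
    have hlt : (s : ℝ≥0∞) < min (γ s) ((s : ℝ≥0∞) + 1) :=
      lt_min (hgt s hs) (ENNReal.lt_add_right (by simp) one_ne_zero)
    rw [← ENNReal.coe_toNNReal hne] at hlt
    exact_mod_cast hlt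
  · intro t₀ _ ε hε
    refine ⟨1, one_pos, fun s hts _ => ?_⟩
    have hne : min (γ s) ((s : ℝ≥0∞) + 1) ≠ ⊤ :=
      ne_top_of_le_ne_top (by simp) (min_le_right _ _)
    have hm : min (γ t₀) ((t₀ : ℝ≥0∞) + 1) ≤ min (γ s) ((s : ℝ≥0∞) + 1) :=
      min_le_min (hmono hts) (by gcongr)
    calc (min (γ t₀) ((t₀ : ℝ≥0∞) + 1)).toNNReal
        ≤ (min (γ s) ((s : ℝ≥0∞) + 1)).toNNReal := ENNReal.toNNReal_mono hne hm
      _ < _ + ε := lt_add_of_pos_right _ hε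
  · intro x
    have : min (γ (f x)) ((f x : ℝ≥0∞) + 1) ≤ (g x : ℝ≥0∞) :=
      le_trans (min_le_left _ _) (hle x)
    have := ENNReal.toNNReal_mono ENNReal.coe_ne_top this
    simpa using this
end

section
/- Let K be a nonempty set and f, g : K → [0,∞). If there exists a function w : [0,∞) → [0,∞) with w(s) > s for all s > 0, w right lower semicontinuous on (0,∞), and w(f(x)) ≤ g(x) for all x ∈ K, then for every ε > 0 there exists δ > 0 such that x ∈ K and g(x) < ε + δ imply f(x) < ε. -/
open scoped NNReal ENNReal

theorem wong_implies_strong {K : Type*} [Nonempty K] (f g : K → ℝ≥0)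
    (h : ∃ w : ℝ≥0 → ℝ≥0, (∀ s : ℝ≥0, 0 < s → s < w s) ∧
      (∀ t₀ : ℝ≥0, 0 < t₀ → ∀ ε : ℝ≥0, 0 < ε →
        ∃ δ : ℝ≥0, 0 < δ ∧ ∀ s, t₀ ≤ s → s < t₀ + δ → w t₀ < w s + ε) ∧
      ∀ x, w (f x) ≤ g x) :
    ∀ ε : ℝ≥0, 0 < ε → ∃ δ : ℝ≥0, 0 < δ ∧ ∀ x, g x < ε + δ → f x < ε := by
  obtain ⟨w, hw1, hw2, hw3⟩ := h
  intro ε hε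
  have hwε : ε < w ε := hw1 ε hε
  set ε' : ℝ≥0 := (w ε - ε) / 2 with hε'def
  have hε'pos : 0 < ε' := by
    have : 0 < w ε - ε := tsub_pos_of_lt hwε
    positivity
  have hsum : w ε = ε + 2 * ε' := by
    have h2 : 2 * ε' = w ε - ε := by
      rw [hε'def]; rw [mul_div_cancel₀]; norm_num
    rw [h2, add_tsub_cancel_of_le hwε.le]
  obtain ⟨δ₁, hδ₁, hδprop⟩ := hw2 ε hε ε' hε'pos
  refine ⟨min δ₁ ε', lt_min hδ₁ hε'pos, ?_⟩
  intro x hx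
  by_contra hfx
  push_neg at hfx
  have hf0 : 0 < f x := lt_of_lt_of_le hε hfx
  by_cases hcase : f x < ε + δ₁
  · have hlt := hδprop (f x) hfx hcase
    rw [hsum] at hlt
    have h2 : ε + ε' < w (f x) := by
      have : (ε + ε') + ε' < w (f x) + ε' := by
        calc (ε + ε') + ε' = ε + 2 * ε' := by ring
        _ < w (f x) + ε' := hlt
      exact lt_of_add_lt_add_right this
    have : g x < g x :=
      lt_of_lt_of_le (lt_of_lt_of_le hx (add_le_add (le_refl ε) (min_le_right _ _)))
        (le_trans h2.le (hw3 x))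
    exact absurd this (lt_irrefl _)
  · push_neg at hcase
    have : g x < g x :=
      calc g x < ε + min δ₁ ε' := hx
        _ ≤ ε + δ₁ := add_le_add (le_refl ε) (min_le_left _ _)
        _ ≤ f x := hcase
        _ < w (f x) := hw1 _ hf0
        _ ≤ g x := hw3 x
    exact absurd this (lt_irrefl _)
end

section
/- Let K be a nonempty set and f, g : K → [0,∞). If there exist a nondecreasing function φ : [0,∞) → [0,∞] and a function ψ : [0,∞) → [0,∞) such that ψ is right upper semicontinuous on (0,∞), φ(t) > ψ(t) for all t > 0, and φ(f(x)) ≤ ψ(g(x)) for all x ∈ K, then for every ε > 0 there exists δ > 0 such that x ∈ K and ε ≤ g(x) < ε + δ imply f(x) < ε. -/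
open scoped NNReal ENNReal

theorem phi_psi_implies_MK {K : Type*} [Nonempty K] (f g : K → ℝ≥0)
    (h : ∃ (φ : ℝ≥0 → ℝ≥0∞) (ψ : ℝ≥0 → ℝ≥0), Monotone φ ∧
      (∀ t₀ : ℝ≥0, 0 < t₀ → ∀ ε : ℝ≥0, 0 < ε →
        ∃ δ : ℝ≥0, 0 < δ ∧ ∀ s, t₀ ≤ s → s < t₀ + δ → ψ s < ψ t₀ + ε) ∧
      (∀ t : ℝ≥0, 0 < t → (ψ t : ℝ≥0∞) < φ t) ∧
      ∀ x, φ (f x) ≤ (ψ (g x) : ℝ≥0∞)) :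
    ∀ ε : ℝ≥0, 0 < ε → ∃ δ : ℝ≥0, 0 < δ ∧
      ∀ x, ε ≤ g x → g x < ε + δ → f x < ε := by
  obtain ⟨φ, ψ, hmono, husc, hlt, hle⟩ := h
  intro ε hε
  obtain ⟨r, hr1, hr2⟩ := exists_between (hlt ε hε)
  have hrtop : r ≠ ⊤ := by
    intro h'
    subst h'
    exact (lt_irrefl _ (hr2.trans_le le_top))
  set r' : ℝ≥0 := r.toNNReal with hr'
  have hrr : (r' : ℝ≥0∞) = r := ENNReal.coe_toNNReal hrtop
  have hψr : ψ ε < r' := by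
    rw [← ENNReal.coe_lt_coe, hrr]; exact hr1
  set ε' : ℝ≥0 := r' - ψ ε with hε'
  have hε'pos : 0 < ε' := tsub_pos_of_lt hψr
  have hsum : ψ ε + ε' = r' := by
    rw [hε', add_tsub_cancel_of_le hψr.le]
  obtain ⟨δ, hδ, hδψ⟩ := husc ε hε ε' hε'pos
  refine ⟨δ, hδ, fun x hx1 hx2 => ?_⟩
  have h1 : ψ (g x) < ψ ε + ε' := hδψ _ hx1 hx2
  have h2 : (ψ (g x) : ℝ≥0∞) < φ ε := by
    calc (ψ (g x) : ℝ≥0∞) < ((ψ ε + ε' : ℝ≥0) : ℝ≥0∞) := ENNReal.coe_lt_coe.mpr h1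
    _ = r := by rw [hsum, hrr]
    _ ≤ φ ε := hr2.le
  have h3 : φ (f x) < φ ε := lt_of_le_of_lt (hle x) h2
  by_contra hc
  exact absurd (hmono (not_lt.mp hc)) (not_le.mpr h3)
end

section
/- Let K be a nonempty set and f, g : K → [0,∞). The following are equivalent: (a) for every ε > 0 there exists δ > 0 such that x ∈ K and ε ≤ g(x) < ε + δ imply f(x) < ε; (b) there exists a function l : (0,∞) → [0,∞) of type (L) such that f(x) < l(g(x)) for all x ∈ K with g(x) ≠ 0. Moreover, in (b) one can choose l right continuous, nondecreasing, and with l(s) > 0 for all s > 0. -/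
open scoped NNReal ENNReal
open Set

theorem MK_main {K : Type*} [Nonempty K] (f g : K → ℝ≥0)
    (h : ∀ ε : ℝ≥0, 0 < ε → ∃ δ : ℝ≥0, 0 < δ ∧
        ∀ x, ε ≤ g x → g x < ε + δ → f x < ε) :
    ∃ l : ℝ≥0 → ℝ≥0,
      (∀ s : ℝ≥0, 0 < s → ∃ δ : ℝ≥0, 0 < δ ∧ ∀ t, s ≤ t → t ≤ s + δ → l t ≤ s) ∧
      (∀ s : ℝ≥0, 0 < s → ContinuousWithinAt l (Set.Ici s) s) ∧
      (∀ s t : ℝ≥0, 0 < s → s ≤ t → l s ≤ l t) ∧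
      (∀ s : ℝ≥0, 0 < s → 0 < l s) ∧
      ∀ x, g x ≠ 0 → f x < l (g x) := by
  have h' : ∀ ε : ℝ≥0, ∃ δ : ℝ≥0, 0 < ε →
      (0 < δ ∧ δ ≤ ε ∧ ∀ x, ε ≤ g x → g x < ε + δ → f x < ε) := by
    intro ε
    by_cases hε : 0 < ε
    · obtain ⟨δ, hδ, hspec⟩ := h ε hε
      exact ⟨min δ ε, fun _ => ⟨lt_min hδ hε, min_le_right _ _,
        fun x h1 h2 => hspec x h1 (h2.trans_le (add_le_add_right (min_le_left _ _) _))⟩⟩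
    · exact ⟨1, fun hh => absurd hh hε⟩
  choose δ hδ using h'
  set D : ℝ≥0 → ℝ≥0 := fun c => sSup ((fun u => u + δ u) '' Set.Ioc 0 c) with hD
  have hDbdd : ∀ c, BddAbove ((fun u => u + δ u) '' Set.Ioc 0 c) := by
    intro c
    refine ⟨2 * c, ?_⟩
    rintro v ⟨u, hu, rfl⟩
    calc u + δ u ≤ u + u := add_le_add_right ((hδ u hu.1).2.1) u
    _ = 2 * u := (two_mul u).symm
    _ ≤ 2 * c := by gcongr; exact hu.2
  have hDmono : Monotone D := by
    intro a b hab
    rcases (Set.Ioc 0 a).eq_empty_or_nonempty with he | hne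
    · simp only [hD, he, Set.image_empty, csSup_empty]
      exact bot_le
    · exact csSup_le_csSup (hDbdd b) (hne.image _)
        (Set.image_mono (Set.Ioc_subset_Ioc_right hab))
  have hDself : ∀ c, 0 < c → c + δ c ≤ D c := by
    intro c hc
    exact le_csSup (hDbdd c) ⟨c, ⟨hc, le_rfl⟩, rfl⟩
  have hDgt : ∀ c, 0 < c → c < D c := by
    intro c hc
    exact lt_of_lt_of_le (lt_add_of_pos_right c (hδ c hc).1) (hDself c hc)
  have hDle : ∀ c s, 0 < s → s ≤ c → s + δ s ≤ D c := by
    intro c s hs hsc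
    exact le_csSup (hDbdd c) ⟨s, ⟨hs, hsc⟩, rfl⟩
  have hfg : ∀ x, g x ≠ 0 → f x < g x := by
    intro x hx
    have hgx : 0 < g x := zero_lt_iff.mpr hx
    exact (hδ (g x) hgx).2.2 x le_rfl (lt_add_of_pos_right _ (hδ (g x) hgx).1)
  have hDfx : ∀ x, g x ≠ 0 → 0 < f x → D (f x) ≤ g x := by
    intro x hx hfx
    refine csSup_le ⟨f x + δ (f x), ⟨f x, ⟨hfx, le_rfl⟩, rfl⟩⟩ ?_
    rintro v ⟨u, ⟨hu0, huc⟩, rfl⟩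
    by_contra hcon
    push_neg at hcon
    have hug : u ≤ g x := le_of_lt (lt_of_le_of_lt huc (hfg x hx))
    exact absurd ((hδ u hu0).2.2 x hug hcon) (not_lt.2 huc)
  -- the first approximation
  set A : ℝ≥0 → Set ℝ≥0 := fun t => (fun c => (c + D c) / 2) '' {c | 0 < c ∧ D c ≤ t} with hA
  have hAbdd : ∀ t, BddAbove (A t) := by
    intro t
    refine ⟨t, ?_⟩
    rintro v ⟨c, ⟨hc0, hct⟩, rfl⟩
    rw [div_le_iff₀ two_pos]
    calc c + D c ≤ t + t := add_le_add ((hDgt c hc0).le.trans hct) hct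
    _ = t * 2 := (mul_two t).symm
  set l₀ : ℝ≥0 → ℝ≥0 := fun t => max (t / 2) (sSup (A t)) with hl₀
  have hl₀mono : Monotone l₀ := by
    intro a b hab
    apply max_le_max
    · gcongr
    · rcases (A a).eq_empty_or_nonempty with he | hne
      · simp only [he, csSup_empty]; exact bot_le
      · refine csSup_le_csSup (hAbdd b) hne (Set.image_mono ?_)
        rintro c ⟨hc0, hct⟩
        exact ⟨hc0, hct.trans hab⟩
  have hl₀L : ∀ s : ℝ≥0, 0 < s → ∃ Δ : ℝ≥0, 0 < Δ ∧ ∀ t, s ≤ t → t ≤ s + Δ → l₀ t ≤ s := by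
    intro s hs
    by_cases hcase : ∃ c₀, c₀ < s ∧ s < D c₀
    · obtain ⟨c₀, hc₀s, hsD⟩ := hcase
      set Δ := min (min s (s - c₀)) ((D c₀ - s) / 2) with hΔdef
      have hΔpos : 0 < Δ := by
        refine lt_min (lt_min hs (tsub_pos_of_lt hc₀s)) ?_
        rw [lt_div_iff₀ two_pos]
        simpa using tsub_pos_of_lt hsD
      refine ⟨Δ, hΔpos, ?_⟩
      intro t hst htΔ
      have hΔs : Δ ≤ s := (min_le_left _ _).trans (min_le_left _ _)
      have hΔc₀ : Δ ≤ s - c₀ := (min_le_left _ _).trans (min_le_right _ _)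
      have hΔD : Δ ≤ (D c₀ - s) / 2 := min_le_right _ _
      apply max_le
      · rw [div_le_iff₀ two_pos, mul_two]
        exact htΔ.trans (add_le_add_right hΔs s)
      · rcases (A t).eq_empty_or_nonempty with he | hne
        · simp only [he, csSup_empty]; exact bot_le
        · refine csSup_le hne ?_
          rintro v ⟨c, ⟨hc0, hct⟩, rfl⟩
          rcases le_or_gt c c₀ with hcc₀ | hcc₀
          · rw [div_le_iff₀ two_pos, mul_two]
            calc c + D c ≤ c₀ + (s + (s - c₀)) :=
                  add_le_add hcc₀ (hct.trans (htΔ.trans (add_le_add_right hΔc₀ s)))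
            _ = (c₀ + (s - c₀)) + s := by ring
            _ = s + s := by rw [add_tsub_cancel_of_le hc₀s.le]
          · exfalso
            have h2Δ : Δ + Δ ≤ D c₀ - s := by
              calc Δ + Δ ≤ (D c₀ - s) / 2 + (D c₀ - s) / 2 := add_le_add hΔD hΔD
              _ = D c₀ - s := add_halves _
            have hDc₀ : s + (Δ + Δ) ≤ D c₀ := by
              calc s + (Δ + Δ) ≤ s + (D c₀ - s) := add_le_add_right h2Δ s
              _ = D c₀ := add_tsub_cancel_of_le hsD.le
            have : D c ≤ s + Δ := hct.trans htΔ
            have hlt : s + Δ < s + (Δ + Δ) := by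
              rw [add_lt_add_iff_left]
              exact lt_add_of_pos_right Δ hΔpos
            exact absurd (hlt.trans_le (hDc₀.trans (hDmono hcc₀.le))) (not_lt.2 this)
    · push_neg at hcase
      refine ⟨min s (δ s / 2), lt_min hs (by
        rw [lt_div_iff₀ two_pos]; simpa using (hδ s hs).1), ?_⟩
      intro t hst htΔ
      have hΔs : min s (δ s / 2) ≤ s := min_le_left _ _
      apply max_le
      · rw [div_le_iff₀ two_pos, mul_two]
        exact htΔ.trans (add_le_add_right hΔs s)
      · rcases (A t).eq_empty_or_nonempty with he | hne
        · simp only [he, csSup_empty]; exact bot_le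
        · refine csSup_le hne ?_
          rintro v ⟨c, ⟨hc0, hct⟩, rfl⟩
          rcases lt_or_ge c s with hcs | hcs
          · rw [div_le_iff₀ two_pos, mul_two]
            exact add_le_add hcs.le (hcase c hcs)
          · exfalso
            have h1 : s + δ s ≤ D c := hDle c s hs hcs
            have h2 : D c ≤ s + min s (δ s / 2) := hct.trans htΔ
            have h3 : min s (δ s / 2) < δ s := by
              refine lt_of_le_of_lt (min_le_right _ _) ?_
              exact half_lt_self (hδ s hs).1
            exact absurd (h1.trans h2) (not_le.2 (add_lt_add_right h3 s))
  have hl₀f : ∀ x, g x ≠ 0 → f x < l₀ (g x) := by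
    intro x hx
    rcases eq_or_lt_of_le ((zero_le : 0 ≤ f x)) with hf0 | hf0
    · refine lt_of_lt_of_le ?_ (le_max_left _ _)
      rw [← hf0]
      positivity
    · refine lt_of_lt_of_le ?_ (le_max_right _ _)
      have hmem : (f x + D (f x)) / 2 ∈ A (g x) := ⟨f x, ⟨hf0, hDfx x hx hf0⟩, rfl⟩
      refine lt_of_lt_of_le ?_ (le_csSup (hAbdd _) hmem)
      rw [lt_div_iff₀ two_pos, mul_two]
      exact add_lt_add_right (hDgt _ hf0) (f x)
  have hl₀pos : ∀ t, 0 < t → 0 < l₀ t := by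
    intro t ht
    refine lt_of_lt_of_le ?_ (le_max_left _ _)
    positivity
  -- right-continuous regularization
  set l : ℝ≥0 → ℝ≥0 := fun t => sInf (l₀ '' Set.Ioi t) with hl
  have hne : ∀ t : ℝ≥0, (l₀ '' Set.Ioi t).Nonempty :=
    fun t => ⟨l₀ (t + 1), ⟨t + 1, by simp, rfl⟩⟩
  have hll : ∀ t, l₀ t ≤ l t := by
    intro t
    refine le_csInf (hne t) ?_
    rintro b ⟨u, hu, rfl⟩
    exact hl₀mono (le_of_lt hu)
  have hlu : ∀ t u, t < u → l t ≤ l₀ u := by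
    intro t u htu
    exact csInf_le (OrderBot.bddBelow _) ⟨u, htu, rfl⟩
  have hlmono : Monotone l := by
    intro a b hab
    refine le_csInf (hne b) ?_
    rintro v ⟨u, hu, rfl⟩
    exact hlu a u (lt_of_le_of_lt hab hu)
  have hkey : ∀ s : ℝ≥0, sInf (l '' Set.Ioi s) = l s := by
    intro s
    apply le_antisymm
    · refine le_csInf (hne s) ?_
      rintro b ⟨u, hu, rfl⟩
      obtain ⟨t, hst, htu⟩ := exists_between (Set.mem_Ioi.mp hu)
      exact (csInf_le (OrderBot.bddBelow _) (Set.mem_image_of_mem l (show t ∈ Set.Ioi s from hst))).trans (hlu t u htu)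
    · refine le_csInf ((Set.nonempty_Ioi (a := s)).image l) ?_
      rintro b ⟨u, hu, rfl⟩
      exact hlmono hu.le
  refine ⟨l, ?_, ?_, ?_, ?_, ?_⟩
  · intro s hs
    obtain ⟨Δ, hΔ, hspec⟩ := hl₀L s hs
    refine ⟨Δ / 2, by positivity, ?_⟩
    intro t h1 h2
    have htlt : t < s + Δ := lt_of_le_of_lt h2 (by
      rw [add_lt_add_iff_left]
      exact half_lt_self hΔ)
    exact (hlu t (s + Δ) htlt).trans (hspec (s + Δ) le_self_add le_rfl)
  · intro s hs
    have hmt := hlmono.tendsto_nhdsGT s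
    rw [hkey s] at hmt
    rw [← continuousWithinAt_Ioi_iff_Ici]
    exact hmt
  · intro s t _ hst
    exact hlmono hst
  · intro s hs
    exact lt_of_lt_of_le (hl₀pos s hs) (hll s)
  · intro x hx
    exact lt_of_lt_of_le (hl₀f x hx) (hll (g x))

theorem MK_iff_Lim {K : Type*} [Nonempty K] (f g : K → ℝ≥0) :
    ((∀ ε : ℝ≥0, 0 < ε → ∃ δ : ℝ≥0, 0 < δ ∧
        ∀ x, ε ≤ g x → g x < ε + δ → f x < ε) ↔
      (∃ l : ℝ≥0 → ℝ≥0,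
        (∀ s : ℝ≥0, 0 < s → ∃ δ : ℝ≥0, 0 < δ ∧ ∀ t, s ≤ t → t ≤ s + δ → l t ≤ s) ∧
        ∀ x, g x ≠ 0 → f x < l (g x))) ∧
    ((∀ ε : ℝ≥0, 0 < ε → ∃ δ : ℝ≥0, 0 < δ ∧
        ∀ x, ε ≤ g x → g x < ε + δ → f x < ε) →
      ∃ l : ℝ≥0 → ℝ≥0,
        (∀ s : ℝ≥0, 0 < s → ∃ δ : ℝ≥0, 0 < δ ∧ ∀ t, s ≤ t → t ≤ s + δ → l t ≤ s) ∧
        (∀ s : ℝ≥0, 0 < s → ContinuousWithinAt l (Set.Ici s) s) ∧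
        (∀ s t : ℝ≥0, 0 < s → s ≤ t → l s ≤ l t) ∧
        (∀ s : ℝ≥0, 0 < s → 0 < l s) ∧
        ∀ x, g x ≠ 0 → f x < l (g x)) := by
  constructor
  · constructor
    · intro hyp
      obtain ⟨l, hL, _, _, _, hf⟩ := MK_main f g hyp
      exact ⟨l, hL, hf⟩
    · rintro ⟨l, hL, hf⟩ ε hε
      obtain ⟨d, hd, hd'⟩ := hL ε hε
      refine ⟨d, hd, fun x h1 h2 => ?_⟩
      exact lt_of_lt_of_le (hf x (hε.trans_le h1).ne') (hd' _ h1 h2.le)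
  · exact MK_main f g
end

section
/- Let K be a nonempty set and f, g : K → [0,∞) with g⁻¹(0) ⊆ f⁻¹(0). Then the Meir-Keeler condition (for every ε > 0 there is δ > 0 with: ε ≤ g(x) < ε+δ implies f(x) < ε) is equivalent to the strengthened condition (for every ε > 0 there is δ > 0 with: g(x) < ε+δ implies f(x) < ε). -/
open scoped NNReal ENNReal

theorem MK_iff_strong {K : Type*} [Nonempty K] (f g : K → ℝ≥0)
    (h0 : ∀ x, g x = 0 → f x = 0) :
    (∀ ε : ℝ≥0, 0 < ε → ∃ δ : ℝ≥0, 0 < δ ∧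
        ∀ x, ε ≤ g x → g x < ε + δ → f x < ε) ↔
      (∀ ε : ℝ≥0, 0 < ε → ∃ δ : ℝ≥0, 0 < δ ∧ ∀ x, g x < ε + δ → f x < ε) := by
  constructor
  · intro h ε hε
    obtain ⟨δ, hδ, hMK⟩ := h ε hε
    refine ⟨δ, hδ, fun x hx => ?_⟩
    rcases le_or_gt ε (g x) with hle | hlt
    · exact hMK x hle hx
    · rcases eq_or_lt_of_le (zero_le (a := g x)) with h0' | hpos
      · calc f x = 0 := h0 x h0'.symm
          _ < ε := hε
      · obtain ⟨δ', hδ', hMK'⟩ := h (g x) hpos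
        have := hMK' x le_rfl (lt_add_of_pos_right _ hδ')
        exact this.trans hlt
  · intro h ε hε
    obtain ⟨δ, hδ, hS⟩ := h ε hε
    exact ⟨δ, hδ, fun x _ hx => hS x hx⟩
end

section
/- Let X be a metric space, T : X → X, and R ⊆ X × X nonempty. T is a Meir-Keeler type mapping on R if and only if there exists a nondecreasing function γ : [0,∞) → [0,∞] such that γ(s) > s for all s > 0 and γ(d(Tx,Ty)) ≤ d(x,y) for all (x,y) ∈ R. -/
open scoped NNReal ENNReal

theorem MK_iff_gamma_metric {X : Type*} [MetricSpace X] (T : X → X)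
    (R : Set (X × X)) (hR : R.Nonempty) :
    (∀ ε : ℝ, 0 < ε → ∃ δ : ℝ, 0 < δ ∧ ∀ p : X × X, p ∈ R →
        ε ≤ dist p.1 p.2 → dist p.1 p.2 < ε + δ → dist (T p.1) (T p.2) < ε) ↔
      (∃ γ : ℝ≥0 → ℝ≥0∞, Monotone γ ∧ (∀ s : ℝ≥0, 0 < s → (s : ℝ≥0∞) < γ s) ∧
        ∀ p : X × X, p ∈ R →
          γ (nndist (T p.1) (T p.2)) ≤ (nndist p.1 p.2 : ℝ≥0∞)) := by
  constructor
  · intro hMK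
    -- T is contractive on R
    have hcontr : ∀ p : X × X, p ∈ R → dist (T p.1) (T p.2) ≤ dist p.1 p.2 := by
      intro p hp
      rcases eq_or_lt_of_le (dist_nonneg : (0:ℝ) ≤ dist p.1 p.2) with h0 | h0
      · have heq : p.1 = p.2 := by
          rw [← dist_le_zero]; linarith
        simp [heq]
      · obtain ⟨δ, hδ, hδ'⟩ := hMK (dist p.1 p.2) h0
        exact le_of_lt (hδ' p hp le_rfl (by linarith))
    refine ⟨fun t => ⨅ (p : {p : X × X // p ∈ R ∧ t ≤ nndist (T p.1) (T p.2)}),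
        (nndist (p.1).1 (p.1).2 : ℝ≥0∞), ?_, ?_, ?_⟩
    · intro a b hab
      apply le_iInf
      intro p
      exact iInf_le_of_le ⟨p.1, p.2.1, hab.trans p.2.2⟩ le_rfl
    · intro s hs
      by_contra h
      push_neg at h
      obtain ⟨δ, hδ, hδ'⟩ := hMK s hs
      have hlt : (⨅ (p : {p : X × X // p ∈ R ∧ s ≤ nndist (T p.1) (T p.2)}),
          (nndist (p.1).1 (p.1).2 : ℝ≥0∞)) < (s : ℝ≥0∞) + ENNReal.ofReal δ := by
        refine lt_of_le_of_lt h ?_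
        exact ENNReal.lt_add_right (by simp) (by simp [hδ, ne_of_gt])
      rw [iInf_lt_iff] at hlt
      obtain ⟨⟨p, hpR, hps⟩, hp⟩ := hlt
      have hps' : (s : ℝ) ≤ dist (T p.1) (T p.2) := by
        rw [dist_nndist]; exact_mod_cast hps
      have hd1 : dist p.1 p.2 < s + δ := by
        have h' : (nndist p.1 p.2 : ℝ≥0) < s + δ.toNNReal := by
          rw [← ENNReal.coe_lt_coe, ENNReal.coe_add]
          simpa [ENNReal.ofReal] using hp
        have h'' := (NNReal.coe_lt_coe.2 h')
        rw [NNReal.coe_add, Real.coe_toNNReal _ hδ.le] at h''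
        rwa [dist_nndist]
      have hd2 : (s : ℝ) ≤ dist p.1 p.2 :=
        le_trans hps' (hcontr p hpR)
      have := hδ' p hpR hd2 hd1
      linarith
    · intro p hp
      exact iInf_le_of_le ⟨p, hp, le_rfl⟩ le_rfl
  · rintro ⟨γ, hmono, hgt, hle⟩ ε hε
    set ε' : ℝ≥0 := ε.toNNReal with hε'
    have hε'pos : 0 < ε' := Real.toNNReal_pos.2 hε
    have h := hgt ε' hε'pos
    obtain ⟨r, hr, hr'⟩ : ∃ r : ℝ≥0, 0 < r ∧ (ε' : ℝ≥0∞) + r < γ ε' := by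
      rcases eq_or_ne (γ ε') ⊤ with hT | hT
      · exact ⟨1, one_pos, by simp [hT]⟩
      · obtain ⟨r, hrpos, hrlt⟩ := ENNReal.lt_iff_exists_add_pos_lt.1 h
        exact ⟨r, hrpos, hrlt⟩
    refine ⟨(r : ℝ), by exact_mod_cast hr, fun p hpR h1 h2 => ?_⟩
    by_contra hcon
    push_neg at hcon
    have hTge : ε' ≤ nndist (T p.1) (T p.2) := by
      rw [hε']
      exact Real.toNNReal_le_iff_le_coe.2 (by rwa [coe_nndist])
    have hdlt : nndist p.1 p.2 < ε' + r := by
      rw [← NNReal.coe_lt_coe, NNReal.coe_add, Real.coe_toNNReal _ hε.le, coe_nndist]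
      exact h2
    have : γ ε' ≤ (nndist p.1 p.2 : ℝ≥0∞) :=
      le_trans (hmono hTge) (hle p hpR)
    have : γ ε' < (ε' : ℝ≥0∞) + r := by
      exact lt_of_le_of_lt this (by exact_mod_cast hdlt)
    exact absurd (hr'.trans this) (lt_irrefl _)
end

section
/- Let X be a metric space, T : X → X, and R ⊆ X × X nonempty. T is a Meir-Keeler type mapping on R if and only if there exists a function l : (0,∞) → [0,∞) of type (L) such that d(Tx,Ty) < l(d(x,y)) for all (x,y) ∈ R with x ≠ y. -/
open scoped NNReal

set_option maxRecDepth 10000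

theorem MK_iff_Lim_metric {X : Type*} [MetricSpace X] (T : X → X)
    (R : Set (X × X)) (hR : R.Nonempty) :
    (∀ ε : ℝ, 0 < ε → ∃ δ : ℝ, 0 < δ ∧ ∀ p : X × X, p ∈ R →
        ε ≤ dist p.1 p.2 → dist p.1 p.2 < ε + δ → dist (T p.1) (T p.2) < ε) ↔
      (∃ l : ℝ≥0 → ℝ≥0,
        (∀ s : ℝ≥0, 0 < s → ∃ δ : ℝ≥0, 0 < δ ∧ ∀ t, s ≤ t → t ≤ s + δ → l t ≤ s) ∧
        ∀ p : X × X, p ∈ R → p.1 ≠ p.2 →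
          nndist (T p.1) (T p.2) < l (nndist p.1 p.2)) := by
  classical
  constructor
  · intro h
    -- NNReal version of the Meir-Keeler hypothesis
    have nnMK : ∀ ε : ℝ≥0, 0 < ε → ∃ δ : ℝ≥0, 0 < δ ∧ ∀ p : X × X, p ∈ R →
        ε ≤ nndist p.1 p.2 → nndist p.1 p.2 < ε + δ → nndist (T p.1) (T p.2) < ε := by
      intro ε hε
      obtain ⟨δr, hδr, hδ⟩ := h ε (by exact_mod_cast hε)
      refine ⟨δr.toNNReal, by simpa using hδr, ?_⟩
      intro p hp h1 h2
      have h2' : dist p.1 p.2 < (ε : ℝ) + δr := by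
        have : (nndist p.1 p.2 : ℝ) < ((ε + δr.toNNReal : ℝ≥0) : ℝ) := by exact_mod_cast h2
        rw [NNReal.coe_add, Real.coe_toNNReal _ hδr.le] at this
        rw [dist_nndist]
        exact this
      have := hδ p hp (by rw [dist_nndist]; exact_mod_cast h1) h2'
      rw [dist_nndist] at this
      exact_mod_cast this
    -- choose the modulus Δ
    set Δ : ℝ≥0 → ℝ≥0 := fun ε => if hε : 0 < ε then (nnMK ε hε).choose else 1 with hΔdef
    have hΔpos : ∀ ε : ℝ≥0, 0 < ε → 0 < Δ ε := by
      intro ε hε; rw [hΔdef]; simp only [dif_pos hε]; exact (nnMK ε hε).choose_spec.1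
    have hΔ : ∀ ε : ℝ≥0, 0 < ε → ∀ p : X × X, p ∈ R →
        ε ≤ nndist p.1 p.2 → nndist p.1 p.2 < ε + Δ ε → nndist (T p.1) (T p.2) < ε := by
      intro ε hε; rw [hΔdef]; simp only [dif_pos hε]; exact (nnMK ε hε).choose_spec.2
    -- the open part of the cover
    set ι := {ε : ℝ≥0 // 0 < ε} with hιdef
    set S : ι → Set ℝ≥0 := fun i => Set.Ioo i.1 (i.1 + Δ i.1) with hSdef
    obtain ⟨Tc, hTc, hTcU⟩ := TopologicalSpace.isOpen_iUnion_countable S (fun i => isOpen_Ioo)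
    set U : Set ℝ≥0 := ⋃ i, S i with hUdef
    set B : Set ℝ≥0 := {t | 0 < t ∧ t ∉ U} with hBdef
    -- B is countable
    have hIooU : ∀ t : ℝ≥0, 0 < t → Set.Ioo t (t + Δ t) ⊆ U := by
      intro t ht
      exact Set.subset_iUnion S ⟨t, ht⟩
    have hBq : ∀ t ∈ B, ∃ q : ℚ, (t : ℝ) < q ∧ (q : ℝ) < (t : ℝ) + Δ t := by
      intro t ht
      exact exists_rat_btwn (by exact_mod_cast lt_add_of_pos_right _ (hΔpos t ht.1))
    set q : ℝ≥0 → ℚ := fun t => if ht : t ∈ B then (hBq t ht).choose else 0 with hqdef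
    have hq1 : ∀ t ∈ B, (t : ℝ) < q t ∧ (q t : ℝ) < (t : ℝ) + Δ t := by
      intro t ht; rw [hqdef]; simp only [dif_pos ht]; exact (hBq t ht).choose_spec
    have hB : B.Countable := by
      have hinj : Set.InjOn q B := by
        intro t1 h1 t2 h2 heq
        by_contra hne
        rcases lt_or_gt_of_ne hne with hlt | hlt
        · have hsub : t2 ∉ Set.Ioo t1 (t1 + Δ t1) := fun hmem => h2.2 (hIooU t1 h1.1 hmem)
          have h12 : t1 + Δ t1 ≤ t2 := by
            by_contra hc
            exact hsub ⟨hlt, lt_of_not_ge hc⟩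
          have : (q t1 : ℝ) < (q t2 : ℝ) := by
            calc (q t1 : ℝ) < (t1 : ℝ) + Δ t1 := (hq1 t1 h1).2
            _ ≤ (t2 : ℝ) := by exact_mod_cast h12
            _ < q t2 := (hq1 t2 h2).1
          rw [heq] at this; exact lt_irrefl _ this
        · have hsub : t1 ∉ Set.Ioo t2 (t2 + Δ t2) := fun hmem => h1.2 (hIooU t2 h2.1 hmem)
          have h12 : t2 + Δ t2 ≤ t1 := by
            by_contra hc
            exact hsub ⟨hlt, lt_of_not_ge hc⟩
          have : (q t2 : ℝ) < (q t1 : ℝ) := by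
            calc (q t2 : ℝ) < (t2 : ℝ) + Δ t2 := (hq1 t2 h2).2
            _ ≤ (t1 : ℝ) := by exact_mod_cast h12
            _ < q t1 := (hq1 t1 h1).1
          rw [heq] at this; exact lt_irrefl _ this
      exact Set.countable_iff_exists_injOn.mpr
        ⟨fun t => Encodable.encode (q t), fun a ha b hb hab =>
          hinj ha hb (Encodable.encode_injective hab)⟩
    set D : Set ℝ≥0 := (Subtype.val '' Tc) ∪ B with hDdef
    have hD : D.Countable := (hTc.image _).union hB
    have hDpos : ∀ ε ∈ D, 0 < ε := by
      rintro ε (⟨i, _, rfl⟩ | hε)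
      · exact i.2
      · exact hε.1
    have cover : ∀ t : ℝ≥0, 0 < t → ∃ ε ∈ D, ε ≤ t ∧ t < ε + Δ ε := by
      intro t ht
      by_cases htU : t ∈ U
      · rw [← hTcU] at htU
        obtain ⟨i, hi, hti⟩ := Set.mem_iUnion₂.mp htU
        exact ⟨i.1, Or.inl ⟨i, hi, rfl⟩, hti.1.le, hti.2⟩
      · exact ⟨t, Or.inr ⟨ht, htU⟩, le_refl t, lt_add_of_pos_right _ (hΔpos t ht)⟩
    have hDne : D.Nonempty := by
      obtain ⟨ε, hε, _⟩ := cover 1 one_pos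
      exact ⟨ε, hε⟩
    obtain ⟨f, hf⟩ := Set.Countable.exists_eq_range hD hDne
    -- the predicate
    set P : ℝ≥0 → ℕ → Prop := fun t n => 0 < f n ∧ f n ≤ t ∧ t < f n + Δ (f n) with hPdef
    have hex : ∀ t : ℝ≥0, 0 < t → ∃ n, P t n := by
      intro t ht
      obtain ⟨ε, hεD, hεt, htε⟩ := cover t ht
      have : ε ∈ Set.range f := hf ▸ hεD
      obtain ⟨n, rfl⟩ := this
      exact ⟨n, hDpos _ hεD, hεt, htε⟩
    set l : ℝ≥0 → ℝ≥0 := fun t => if h : ∃ n, P t n then f (Nat.find h) else 1 with hldef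
    refine ⟨l, ?_, ?_⟩
    · -- type (L)
      intro s hs
      have hsx := hex s hs
      set N := Nat.find hsx with hN
      have hNP : P s N := Nat.find_spec hsx
      set F : Finset ℕ := (Finset.range N).filter (fun n => s < f n) with hF
      set A : Finset ℝ≥0 := insert (f N + Δ (f N) - s) (F.image (fun n => f n - s)) with hA
      have hAne : A.Nonempty := ⟨_, Finset.mem_insert_self _ _⟩
      set δ₀ : ℝ≥0 := A.min' hAne with hδ₀
      have hδ₀pos : 0 < δ₀ := by
        rw [hδ₀, Finset.lt_min'_iff]
        intro b hb
        rw [hA, Finset.mem_insert] at hb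
        rcases hb with rfl | hb
        · exact tsub_pos_of_lt hNP.2.2
        · obtain ⟨n, hn, rfl⟩ := Finset.mem_image.mp hb
          exact tsub_pos_of_lt (Finset.mem_filter.mp hn).2
      refine ⟨δ₀ / 2, by positivity, ?_⟩
      intro t hst htsδ
      have ht : 0 < t := lt_of_lt_of_le hs hst
      have hhalf : δ₀ / 2 < δ₀ := NNReal.half_lt_self hδ₀pos.ne'
      have htlt : t < s + δ₀ := lt_of_le_of_lt htsδ (by exact add_lt_add_right hhalf s)
      have hPtN : P t N := by
        refine ⟨hNP.1, le_trans hNP.2.1 hst, ?_⟩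
        calc t < s + δ₀ := htlt
        _ ≤ s + (f N + Δ (f N) - s) := add_le_add_right (Finset.min'_le _ _ (Finset.mem_insert_self _ _)) s
        _ = f N + Δ (f N) := add_tsub_cancel_of_le hNP.2.2.le
      have hext : ∃ n, P t n := ⟨N, hPtN⟩
      have hlt : l t = f (Nat.find hext) := by rw [hldef]; simp only [dif_pos hext]
      set M := Nat.find hext with hM
      have hMP : P t M := Nat.find_spec hext
      have hMN : M ≤ N := Nat.find_min' hext hPtN
      rw [hlt]
      by_contra hc
      push_neg at hc
      -- s < f M
      rcases eq_or_lt_of_le hMN with heq | hltMN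
      · rw [heq] at hc
        exact absurd (le_trans hNP.2.1 (le_refl s)) (not_le.mpr hc)
      · have hMF : M ∈ F := Finset.mem_filter.mpr ⟨Finset.mem_range.mpr hltMN, hc⟩
        have hmem : f M - s ∈ A := by
          rw [hA]; exact Finset.mem_insert_of_mem (Finset.mem_image_of_mem _ hMF)
        have : t < f M := by
          calc t < s + δ₀ := htlt
          _ ≤ s + (f M - s) := add_le_add_right (Finset.min'_le _ _ hmem) s
          _ = f M := add_tsub_cancel_of_le hc.le
        exact absurd hMP.2.1 (not_le.mpr this)
    · -- the contraction inequality
      intro p hp hne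
      have ht : 0 < nndist p.1 p.2 := by
        have := dist_pos.mpr hne
        rw [dist_nndist] at this
        exact_mod_cast this
      have hext := hex _ ht
      have hl : l (nndist p.1 p.2) = f (Nat.find hext) := by
        rw [hldef]; simp only [dif_pos hext]
      have hspec : P (nndist p.1 p.2) (Nat.find hext) := Nat.find_spec hext
      rw [hl]
      exact hΔ _ hspec.1 p hp hspec.2.1 hspec.2.2
  · -- converse
    rintro ⟨l, hL, hl⟩ ε hε
    obtain ⟨δ, hδ, hδl⟩ := hL ε.toNNReal (Real.toNNReal_pos.mpr hε)
    refine ⟨δ, by exact_mod_cast hδ, ?_⟩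
    intro p hp h1 h2
    have hne : p.1 ≠ p.2 := by
      intro heq
      rw [heq] at h1
      simp at h1
      linarith
    have hnd : ε.toNNReal ≤ nndist p.1 p.2 := by
      rw [← Real.toNNReal_coe (r := nndist p.1 p.2)]
      exact Real.toNNReal_mono (by rwa [dist_nndist] at h1)
    have hnd2 : nndist p.1 p.2 ≤ ε.toNNReal + δ := by
      have : dist p.1 p.2 ≤ ε + δ := h2.le
      rw [dist_nndist] at this
      rw [← Real.toNNReal_coe (r := nndist p.1 p.2)]
      calc (nndist p.1 p.2 : ℝ).toNNReal ≤ (ε + δ : ℝ).toNNReal := Real.toNNReal_mono this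
      _ = ε.toNNReal + δ := by
          rw [Real.toNNReal_add hε.le (by positivity)]
          simp
    have := lt_of_lt_of_le (hl p hp hne) (hδl _ hnd hnd2)
    have hfin : dist (T p.1) (T p.2) < (ε.toNNReal : ℝ) := by
      rw [dist_nndist]; exact_mod_cast this
    rwa [Real.coe_toNNReal _ hε.le] at hfin
end

section
/- Let X be a metric space, T : X → X, and R ⊆ X × X nonempty. T is a Meir-Keeler type mapping on R if and only if there exist a nondecreasing function φ : [0,∞) → [0,∞] and a function ψ : [0,∞) → [0,∞), right upper semicontinuous on (0,∞), with φ(t) > ψ(t) for all t > 0 and φ(d(Tx,Ty)) ≤ ψ(d(x,y)) for all (x,y) ∈ R. -/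
open scoped NNReal ENNReal

namespace MKAux

variable {X : Type*} [MetricSpace X]

/-- The set of valid "right endpoints" for the Meir-Keeler condition at level `ε`. -/
def V (T : X → X) (R : Set (X × X)) (ε : ℝ≥0) : Set ℝ≥0∞ :=
  {b | (ε : ℝ≥0∞) < b ∧ ∀ p : X × X, p ∈ R → ε ≤ nndist p.1 p.2 →
    (nndist p.1 p.2 : ℝ≥0∞) < b → nndist (T p.1) (T p.2) < ε}

noncomputable def beta (T : X → X) (R : Set (X × X)) (ε : ℝ≥0) : ℝ≥0∞ :=
  sSup (V T R ε)

/-- Meir-Keeler condition, `ℝ≥0` version. -/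
def MKnn (T : X → X) (R : Set (X × X)) : Prop :=
  ∀ ε : ℝ≥0, 0 < ε → ∃ δ : ℝ≥0, 0 < δ ∧ ∀ p : X × X, p ∈ R →
    ε ≤ nndist p.1 p.2 → nndist p.1 p.2 < ε + δ → nndist (T p.1) (T p.2) < ε

variable {T : X → X} {R : Set (X × X)}

theorem self_lt_beta (hMK : MKnn T R) {ε : ℝ≥0} (hε : 0 < ε) :
    (ε : ℝ≥0∞) < beta T R ε := by
  obtain ⟨δ, hδ, h⟩ := hMK ε hε
  refine lt_of_lt_of_le ?_ (le_sSup (?_ : ((ε + δ : ℝ≥0) : ℝ≥0∞) ∈ V T R ε))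
  · exact_mod_cast lt_add_of_pos_right ε hδ
  · refine ⟨by exact_mod_cast lt_add_of_pos_right ε hδ, fun p hp h1 h2 => ?_⟩
    exact_mod_cast h p hp h1 (by exact_mod_cast h2)

theorem beta_mono (hMK : MKnn T R) {a b : ℝ≥0} (ha : 0 < a) (hab : a ≤ b) :
    beta T R a ≤ beta T R b := by
  apply sSup_le
  intro x hx
  by_cases hxb : (b : ℝ≥0∞) < x
  · refine le_sSup ⟨hxb, fun p hp h1 h2 => ?_⟩
    exact lt_of_lt_of_le (hx.2 p hp (le_trans hab h1) h2) (by exact_mod_cast hab)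
  · exact le_trans (not_lt.1 hxb) (self_lt_beta hMK (lt_of_lt_of_le ha hab)).le

theorem pair_lt (hp : p ∈ R) {ε : ℝ≥0} (h1 : ε ≤ nndist p.1 p.2)
    (h2 : (nndist p.1 p.2 : ℝ≥0∞) < beta T R ε) : nndist (T p.1) (T p.2) < ε := by
  obtain ⟨b, hb, hlt⟩ := lt_sSup_iff.1 h2
  exact hb.2 p hp h1 hlt

def gammaSet (T : X → X) (R : Set (X × X)) (t : ℝ≥0) : Set ℝ≥0 :=
  {ε | 0 < ε ∧ (t : ℝ≥0∞) < beta T R ε}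

noncomputable def gamma (T : X → X) (R : Set (X × X)) (t : ℝ≥0) : ℝ≥0 :=
  sInf (gammaSet T R t)

theorem gammaSet_ne (hMK : MKnn T R) (t : ℝ≥0) : (gammaSet T R t).Nonempty := by
  refine ⟨t + 1, by positivity, ?_⟩
  refine lt_trans ?_ (self_lt_beta hMK (by positivity))
  exact_mod_cast lt_add_of_pos_right t one_pos

theorem gamma_le_self (hMK : MKnn T R) {t : ℝ≥0} (ht : 0 < t) : gamma T R t ≤ t :=
  csInf_le (OrderBot.bddBelow _) ⟨ht, self_lt_beta hMK ht⟩

theorem lt_beta_of_gamma_lt (hMK : MKnn T R) {t ε : ℝ≥0} (h : gamma T R t < ε) :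
    (t : ℝ≥0∞) < beta T R ε := by
  obtain ⟨ε'', h'', hlt⟩ := exists_lt_of_csInf_lt (gammaSet_ne hMK t) h
  exact lt_of_lt_of_le h''.2 (beta_mono hMK h''.1 hlt.le)

theorem gamma_le (hMK : MKnn T R) {t ε : ℝ≥0} (hε : 0 < ε)
    (h : (t : ℝ≥0∞) < beta T R ε) : gamma T R t ≤ ε :=
  csInf_le (OrderBot.bddBelow _) ⟨hε, h⟩

theorem pair_le_gamma (hMK : MKnn T R) (hp : p ∈ R) (ht : 0 < nndist p.1 p.2)
    (hγlt : gamma T R (nndist p.1 p.2) < nndist p.1 p.2) :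
    nndist (T p.1) (T p.2) ≤ gamma T R (nndist p.1 p.2) := by
  by_contra h
  push_neg at h
  have hε : gamma T R (nndist p.1 p.2) < min (nndist (T p.1) (T p.2)) (nndist p.1 p.2) :=
    lt_min h hγlt
  have := pair_lt hp (min_le_right _ _) (lt_beta_of_gamma_lt hMK hε)
  exact absurd this (not_lt.2 (min_le_left _ _))

def Sset (T : X → X) (R : Set (X × X)) : Set ℝ≥0 :=
  {t | 0 < t ∧ gamma T R t = t}

theorem beta_le_of_S (hMK : MKnn T R) {t t' : ℝ≥0} (ht : t ∈ Sset T R)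
    (ht' : t' ∈ Sset T R) (h : t < t') : beta T R t ≤ (t' : ℝ≥0∞) := by
  by_contra h'
  push_neg at h'
  have : gamma T R t' ≤ t := gamma_le hMK ht.1 h'
  rw [ht'.2] at this
  exact absurd h (not_lt.2 this)

theorem S_countable (hMK : MKnn T R) : (Sset T R).Countable := by
  have key : ∀ t : ↥(Sset T R), ∃ q : ℚ, ((t : ℝ≥0) : ℝ) < (q : ℝ) ∧
      ∃ c : ℝ≥0, (q : ℝ) < (c : ℝ) ∧ (c : ℝ≥0∞) < beta T R t := by
    intro t
    obtain ⟨c, hc1, hc2⟩ := ENNReal.lt_iff_exists_nnreal_btwn.1 (self_lt_beta hMK t.2.1)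
    obtain ⟨q, hq1, hq2⟩ := exists_rat_btwn (show ((t : ℝ≥0) : ℝ) < (c : ℝ) by
      exact_mod_cast hc1)
    exact ⟨q, hq1, c, hq2, hc2⟩
  choose f hf1 c hc1 hc2 using key
  have hinj : Function.Injective f := by
    intro a b hab
    by_contra hne
    have hne' : (a : ℝ≥0) ≠ (b : ℝ≥0) := fun h => hne (Subtype.ext h)
    rcases hne'.lt_or_gt with h | h
    · -- a < b : f a < f b as reals
      have hba : beta T R a ≤ ((b : ℝ≥0) : ℝ≥0∞) := beta_le_of_S hMK a.2 b.2 h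
      have h1 : ((c a : ℝ≥0) : ℝ≥0∞) < ((b : ℝ≥0) : ℝ≥0∞) := lt_of_lt_of_le (hc2 a) hba
      have h2 : ((c a : ℝ≥0) : ℝ) < ((b : ℝ≥0) : ℝ) := by exact_mod_cast h1
      have : ((f a : ℚ) : ℝ) < ((f b : ℚ) : ℝ) :=
        lt_trans (lt_trans (hc1 a) h2) (hf1 b)
      rw [hab] at this
      exact lt_irrefl _ this
    · have hba : beta T R b ≤ ((a : ℝ≥0) : ℝ≥0∞) := beta_le_of_S hMK b.2 a.2 h
      have h1 : ((c b : ℝ≥0) : ℝ≥0∞) < ((a : ℝ≥0) : ℝ≥0∞) := lt_of_lt_of_le (hc2 b) hba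
      have h2 : ((c b : ℝ≥0) : ℝ) < ((a : ℝ≥0) : ℝ) := by exact_mod_cast h1
      have : ((f b : ℚ) : ℝ) < ((f a : ℚ) : ℝ) :=
        lt_trans (lt_trans (hc1 b) h2) (hf1 a)
      rw [hab] at this
      exact lt_irrefl _ this
  exact Set.countable_iff_exists_injective.2
    ⟨fun t => Encodable.encode (f t), fun a b h => hinj (Encodable.encode_injective h)⟩

noncomputable def enc (hMK : MKnn T R) : ↥(Sset T R) → ℕ :=
  Classical.choose (Set.countable_iff_exists_injective.1 (S_countable hMK))

theorem enc_inj (hMK : MKnn T R) : Function.Injective (enc hMK) :=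
  Classical.choose_spec (Set.countable_iff_exists_injective.1 (S_countable hMK))

noncomputable def wt (hMK : MKnn T R) (t : ↥(Sset T R)) : ℝ≥0∞ :=
  (2 : ℝ≥0∞)⁻¹ ^ (enc hMK t)

theorem wt_ne_zero (hMK : MKnn T R) (t : ↥(Sset T R)) : wt hMK t ≠ 0 :=
  pow_ne_zero _ (by simp)

theorem wt_tsum_ne_top (hMK : MKnn T R) : (∑' t : ↥(Sset T R), wt hMK t) ≠ ⊤ := by
  have h1 : (∑' t : ↥(Sset T R), wt hMK t) ≤ ∑' n : ℕ, (2 : ℝ≥0∞)⁻¹ ^ n :=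
    ENNReal.tsum_comp_le_tsum_of_injective (enc_inj hMK) _
  have h2 : (∑' n : ℕ, (2 : ℝ≥0∞)⁻¹ ^ n) = (1 - 2⁻¹)⁻¹ := ENNReal.tsum_geometric _
  refine ne_top_of_le_ne_top ?_ h1
  rw [h2]
  rw [Ne, ENNReal.inv_eq_top, tsub_eq_zero_iff_le]
  exact not_le.2 (ENNReal.inv_lt_one.2 ENNReal.one_lt_two)

noncomputable def jle (hMK : MKnn T R) (s : ℝ≥0) : ℝ≥0∞ :=
  ∑' t : ↥(Sset T R), if (t : ℝ≥0) ≤ s then wt hMK t else 0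

noncomputable def jlt (hMK : MKnn T R) (s : ℝ≥0) : ℝ≥0∞ :=
  ∑' t : ↥(Sset T R), if (t : ℝ≥0) < s then wt hMK t else 0

theorem ite_le_ite {c d : Prop} [Decidable c] [Decidable d] (w : ℝ≥0∞) (h : c → d) :
    (if c then w else 0) ≤ if d then w else 0 := by
  split_ifs with h1 h2
  · exact le_rfl
  · exact absurd (h h1) h2
  · exact zero_le
  · exact le_rfl

theorem jle_ne_top (hMK : MKnn T R) (s : ℝ≥0) : jle hMK s ≠ ⊤ :=
  ne_top_of_le_ne_top (wt_tsum_ne_top hMK)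
    (ENNReal.tsum_le_tsum fun t => by split_ifs <;> simp)

theorem jlt_ne_top (hMK : MKnn T R) (s : ℝ≥0) : jlt hMK s ≠ ⊤ :=
  ne_top_of_le_ne_top (wt_tsum_ne_top hMK)
    (ENNReal.tsum_le_tsum fun t => by split_ifs <;> simp)

theorem jle_mono (hMK : MKnn T R) {s s' : ℝ≥0} (h : s ≤ s') : jle hMK s ≤ jle hMK s' :=
  ENNReal.tsum_le_tsum fun t => ite_le_ite _ fun ht => le_trans ht h

theorem jlt_le_jle (hMK : MKnn T R) (s : ℝ≥0) : jlt hMK s ≤ jle hMK s :=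
  ENNReal.tsum_le_tsum fun t => ite_le_ite _ fun ht => ht.le

theorem jle_le_jlt (hMK : MKnn T R) {s s' : ℝ≥0} (h : s < s') : jle hMK s ≤ jlt hMK s' :=
  ENNReal.tsum_le_tsum fun t => ite_le_ite _ fun ht => lt_of_le_of_lt ht h

theorem jle_zero (hMK : MKnn T R) : jle hMK 0 = 0 :=
  ENNReal.tsum_eq_zero.2 fun t => if_neg (by simpa using t.2.1.ne')

theorem jlt_lt_jle (hMK : MKnn T R) {t₀ : ℝ≥0} (h : t₀ ∈ Sset T R) :
    jlt hMK t₀ < jle hMK t₀ := by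
  have key : jlt hMK t₀ + wt hMK ⟨t₀, h⟩ ≤ jle hMK t₀ := by
    have heq : (∑' t : ↥(Sset T R), if t = (⟨t₀, h⟩ : ↥(Sset T R)) then wt hMK t else 0)
        = wt hMK ⟨t₀, h⟩ := by
      have : ∀ t : ↥(Sset T R), (if t = (⟨t₀, h⟩ : ↥(Sset T R)) then wt hMK t else 0)
          = if t = (⟨t₀, h⟩ : ↥(Sset T R)) then wt hMK ⟨t₀, h⟩ else 0 := by
        intro t
        split_ifs with ht
        · rw [ht]
        · rfl
      rw [tsum_congr this, tsum_ite_eq]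
    calc jlt hMK t₀ + wt hMK ⟨t₀, h⟩
        = ∑' t : ↥(Sset T R), ((if (t : ℝ≥0) < t₀ then wt hMK t else 0) +
            (if t = (⟨t₀, h⟩ : ↥(Sset T R)) then wt hMK t else 0)) := by
          rw [ENNReal.tsum_add, heq]; rfl
      _ ≤ jle hMK t₀ := by
          refine ENNReal.tsum_le_tsum fun t => ?_
          by_cases h1 : (t : ℝ≥0) < t₀
          · have hne : ¬ t = (⟨t₀, h⟩ : ↥(Sset T R)) := fun ht => by
              rw [ht] at h1; exact lt_irrefl _ h1
            rw [if_pos h1, if_neg hne, add_zero, if_pos h1.le]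
          · by_cases h2 : t = (⟨t₀, h⟩ : ↥(Sset T R))
            · rw [if_neg h1, if_pos h2, zero_add,
                if_pos (le_of_eq (congrArg Subtype.val h2))]
            · rw [if_neg h1, if_neg h2, add_zero]
              exact zero_le
  exact lt_of_lt_of_le
    (ENNReal.lt_add_right (jlt_ne_top hMK t₀) (wt_ne_zero hMK _)) key

/-- right continuity from above of `jle` (up to `ε`). -/
theorem jle_rc (hMK : MKnn T R) (s₀ : ℝ≥0) {ε : ℝ≥0∞} (hε : 0 < ε) :
    ∃ η : ℝ≥0, 0 < η ∧ jle hMK (s₀ + η) ≤ jle hMK s₀ + ε := by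
  classical
  have main : ∃ η : ℝ≥0, 0 < η ∧ η ≤ 1 ∧
      (∑' t : ↥(Sset T R), if s₀ < (t : ℝ≥0) ∧ (t : ℝ≥0) ≤ s₀ + η then wt hMK t else 0)
        ≤ ε := by
    by_cases hGε : (∑' t : ↥(Sset T R),
        if s₀ < (t : ℝ≥0) ∧ (t : ℝ≥0) ≤ s₀ + 1 then wt hMK t else 0) ≤ ε
    · exact ⟨1, one_pos, le_rfl, hGε⟩
    · push_neg at hGε
      set g : ↥(Sset T R) → ℝ≥0∞ :=
        fun t => if s₀ < (t : ℝ≥0) ∧ (t : ℝ≥0) ≤ s₀ + 1 then wt hMK t else 0 with hg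
      have hgt : ∀ t : ↥(Sset T R),
          g t = if s₀ < (t : ℝ≥0) ∧ (t : ℝ≥0) ≤ s₀ + 1 then wt hMK t else 0 :=
        fun _ => rfl
      have hGtop : (∑' t, g t) ≠ ⊤ := by
        refine ne_top_of_le_ne_top (wt_tsum_ne_top hMK) (ENNReal.tsum_le_tsum fun t => ?_)
        rw [hgt t]
        split_ifs
        · exact le_rfl
        · exact zero_le
      have hsub : (∑' t, g t) - ε < ∑' t, g t :=
        ENNReal.sub_lt_self hGtop (ne_of_gt (lt_of_le_of_lt (zero_le) hGε)) hε.ne'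
      have hsub2 : (∑' t, g t) - ε < ⨆ F : Finset ↥(Sset T R), ∑ t ∈ F, g t := by
        rwa [← ENNReal.tsum_eq_iSup_sum]
      obtain ⟨F, hF⟩ := lt_iSup_iff.1 hsub2
      set F' : Finset ↥(Sset T R) := F.filter (fun t => s₀ < (t : ℝ≥0)) with hF'def
      have hF'sum : (∑' t, g t) - ε < ∑ t ∈ F', g t := by
        rw [hF'def, Finset.sum_filter_of_ne]
        · exact hF
        · intro t _ hne
          by_contra hs
          refine hne ?_
          rw [hgt t]
          exact if_neg (fun hc => hs hc.1)
      rcases Finset.eq_empty_or_nonempty F' with hemp | hnemp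
      · rw [hemp, Finset.sum_empty] at hF'sum
        exact absurd hF'sum (by simp)
      · set m : ↥(Sset T R) := F'.min' hnemp with hm
        have hs₀m : s₀ < (m : ℝ≥0) :=
          (Finset.mem_filter.1 (F'.min'_mem hnemp)).2
        set η : ℝ≥0 := min (((m : ℝ≥0) - s₀) / 2) 1 with hηdef
        have hηpos : 0 < η := by
          refine lt_min ?_ one_pos
          have h0 : 0 < (m : ℝ≥0) - s₀ := tsub_pos_of_lt hs₀m
          positivity
        have hη1 : η ≤ 1 := min_le_right _ _
        have hηm : s₀ + η < (m : ℝ≥0) := by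
          calc s₀ + η ≤ s₀ + ((m : ℝ≥0) - s₀) / 2 := add_le_add le_rfl (min_le_left _ _)
            _ < s₀ + ((m : ℝ≥0) - s₀) :=
              add_lt_add_right (NNReal.half_lt_self (tsub_pos_of_lt hs₀m).ne') _
            _ = (m : ℝ≥0) := add_tsub_cancel_of_le hs₀m.le
        refine ⟨η, hηpos, hη1, ?_⟩
        have hsplit : (∑ t ∈ F', g t) + (∑' t, if t ∈ F' then 0 else g t) = ∑' t, g t := by
          have h1 : (∑' t, if t ∈ F' then g t else 0) = ∑ t ∈ F', g t := by
            rw [tsum_eq_sum (s := F') (fun t ht => if_neg ht)]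
            exact Finset.sum_congr rfl fun t ht => if_pos ht
          rw [← h1, ← ENNReal.tsum_add]
          refine tsum_congr fun t => ?_
          by_cases h : t ∈ F' <;> simp [h]
        have hrest : (∑' t, if t ∈ F' then 0 else g t) ≤ ε := by
          by_contra hcon
          push_neg at hcon
          have habs : (∑' t, g t) < ∑' t, g t := by
            calc (∑' t, g t) = ((∑' t, g t) - ε) + ε := (tsub_add_cancel_of_le hGε.le).symm
              _ < (∑ t ∈ F', g t) + (∑' t, if t ∈ F' then 0 else g t) :=
                  ENNReal.add_lt_add hF'sum hcon
              _ = ∑' t, g t := hsplit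
          exact lt_irrefl _ habs
        refine le_trans (ENNReal.tsum_le_tsum fun t => ?_) hrest
        by_cases hc : s₀ < (t : ℝ≥0) ∧ (t : ℝ≥0) ≤ s₀ + η
        · have htm : (t : ℝ≥0) < (m : ℝ≥0) := lt_of_le_of_lt hc.2 hηm
          have hnotF' : t ∉ F' := by
            intro hmem
            have := F'.min'_le t hmem
            rw [← hm] at this
            exact absurd htm (not_lt.2 this)
          have hgteq : g t = wt hMK t := by
            rw [hgt t]
            exact if_pos ⟨hc.1, le_trans hc.2 (add_le_add le_rfl hη1)⟩
          rw [if_pos hc, if_neg hnotF', hgteq]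
        · rw [if_neg hc]
          exact zero_le
  obtain ⟨η, hηpos, hη1, hrem⟩ := main
  refine ⟨η, hηpos, ?_⟩
  calc jle hMK (s₀ + η)
      ≤ jle hMK s₀ + ∑' t : ↥(Sset T R),
          (if s₀ < (t : ℝ≥0) ∧ (t : ℝ≥0) ≤ s₀ + η then wt hMK t else 0) := by
        rw [jle, jle, ← ENNReal.tsum_add]
        refine ENNReal.tsum_le_tsum fun t => ?_
        by_cases h1 : (t : ℝ≥0) ≤ s₀
        · rw [if_pos (le_trans h1 le_self_add), if_pos h1]
          exact le_self_add
        · push_neg at h1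
          by_cases h2 : (t : ℝ≥0) ≤ s₀ + η
          · rw [if_pos h2, if_neg (not_le.2 h1), if_pos ⟨h1, h2⟩, zero_add]
          · rw [if_neg h2]
            exact zero_le
    _ ≤ jle hMK s₀ + ε := add_le_add le_rfl hrem

noncomputable def phi (hMK : MKnn T R) (s : ℝ≥0) : ℝ≥0∞ := (s : ℝ≥0∞) + jle hMK s

noncomputable def psi (hMK : MKnn T R) (t : ℝ≥0) : ℝ≥0 :=
  if 0 < gamma T R t then
    (if (t : ℝ≥0∞) < beta T R (gamma T R t) then
      gamma T R t + (jlt hMK (gamma T R t)).toNNReal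
     else gamma T R t + (jle hMK (gamma T R t)).toNNReal)
  else 0

theorem phi_mono (hMK : MKnn T R) : Monotone (phi hMK) :=
  fun _ _ h => add_le_add (by exact_mod_cast h) (jle_mono hMK h)

theorem psi_coe_att (hMK : MKnn T R) {t : ℝ≥0} (h1 : 0 < gamma T R t)
    (h2 : (t : ℝ≥0∞) < beta T R (gamma T R t)) :
    (psi hMK t : ℝ≥0∞) = (gamma T R t : ℝ≥0∞) + jlt hMK (gamma T R t) := by
  rw [psi, if_pos h1, if_pos h2]
  push_cast
  rw [ENNReal.coe_toNNReal (jlt_ne_top hMK _)]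

theorem psi_coe_natt (hMK : MKnn T R) {t : ℝ≥0} (h1 : 0 < gamma T R t)
    (h2 : ¬ (t : ℝ≥0∞) < beta T R (gamma T R t)) :
    (psi hMK t : ℝ≥0∞) = (gamma T R t : ℝ≥0∞) + jle hMK (gamma T R t) := by
  rw [psi, if_pos h1, if_neg h2]
  push_cast
  rw [ENNReal.coe_toNNReal (jle_ne_top hMK _)]

theorem psi_zero (hMK : MKnn T R) {t : ℝ≥0} (h1 : ¬ 0 < gamma T R t) :
    psi hMK t = 0 := by rw [psi, if_neg h1]

theorem psi_le (hMK : MKnn T R) (s : ℝ≥0) :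
    (psi hMK s : ℝ≥0∞) ≤ (gamma T R s : ℝ≥0∞) + jle hMK (gamma T R s) := by
  by_cases h1 : 0 < gamma T R s
  · by_cases h2 : (s : ℝ≥0∞) < beta T R (gamma T R s)
    · rw [psi_coe_att hMK h1 h2]
      exact add_le_add le_rfl (jlt_le_jle hMK _)
    · rw [psi_coe_natt hMK h1 h2]
  · rw [psi_zero hMK h1]
    simp

theorem psi_lt_phi (hMK : MKnn T R) {t : ℝ≥0} (ht : 0 < t) :
    (psi hMK t : ℝ≥0∞) < phi hMK t := by
  by_cases h1 : 0 < gamma T R t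
  · by_cases h2 : (t : ℝ≥0∞) < beta T R (gamma T R t)
    · rw [psi_coe_att hMK h1 h2, phi]
      rcases eq_or_lt_of_le (gamma_le_self hMK ht) with heq | hlt
      · rw [heq]
        exact ENNReal.add_lt_add_left ENNReal.coe_ne_top (jlt_lt_jle hMK ⟨ht, heq⟩)
      · calc (gamma T R t : ℝ≥0∞) + jlt hMK (gamma T R t)
            ≤ (gamma T R t : ℝ≥0∞) + jle hMK t :=
              add_le_add le_rfl (le_trans (jlt_le_jle hMK _) (jle_mono hMK hlt.le))
          _ < (t : ℝ≥0∞) + jle hMK t :=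
              ENNReal.add_lt_add_right (jle_ne_top hMK t) (by exact_mod_cast hlt)
    · have hlt : gamma T R t < t := by
        rcases eq_or_lt_of_le (gamma_le_self hMK ht) with heq | hlt
        · refine absurd ?_ h2
          rw [heq]
          exact self_lt_beta hMK ht
        · exact hlt
      rw [psi_coe_natt hMK h1 h2, phi]
      calc (gamma T R t : ℝ≥0∞) + jle hMK (gamma T R t)
          ≤ (gamma T R t : ℝ≥0∞) + jle hMK t := add_le_add le_rfl (jle_mono hMK hlt.le)
        _ < (t : ℝ≥0∞) + jle hMK t :=
            ENNReal.add_lt_add_right (jle_ne_top hMK t) (by exact_mod_cast hlt)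
  · rw [psi_zero hMK h1, phi]
    refine lt_of_lt_of_le ?_ le_self_add
    exact_mod_cast ht

theorem pair_cond (hMK : MKnn T R) (p : X × X) (hp : p ∈ R) :
    phi hMK (nndist (T p.1) (T p.2)) ≤ (psi hMK (nndist p.1 p.2) : ℝ≥0∞) := by
  set t := nndist p.1 p.2 with hteq
  set u := nndist (T p.1) (T p.2) with hueq
  by_cases ht : 0 < t
  · by_cases hatt : 0 < gamma T R t ∧ (t : ℝ≥0∞) < beta T R (gamma T R t)
    · have hu : u < gamma T R t := pair_lt hp (gamma_le_self hMK ht) hatt.2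
      rw [psi_coe_att hMK hatt.1 hatt.2, phi]
      exact add_le_add (by exact_mod_cast hu.le) (jle_le_jlt hMK hu)
    · have hne : gamma T R t ≠ t := by
        intro heq
        refine hatt ⟨?_, ?_⟩
        · rw [heq]; exact ht
        · rw [heq]; exact self_lt_beta hMK ht
      have hγlt : gamma T R t < t := lt_of_le_of_ne (gamma_le_self hMK ht) hne
      have hu : u ≤ gamma T R t := pair_le_gamma hMK hp ht hγlt
      by_cases h1 : 0 < gamma T R t
      · rw [psi_coe_natt hMK h1 (fun h2 => hatt ⟨h1, h2⟩), phi]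
        exact add_le_add (by exact_mod_cast hu) (jle_mono hMK hu)
      · have hu0 : u = 0 := le_antisymm (le_trans hu (not_lt.1 h1)) (zero_le)
        rw [phi, hu0, jle_zero hMK]
        simp
  · have ht0 : t = 0 := le_antisymm (not_lt.1 ht) (zero_le)
    have hp12 : p.1 = p.2 := by
      rwa [hteq, ← NNReal.coe_eq_zero, coe_nndist, dist_eq_zero] at ht0
    have hu0 : u = 0 := by rw [hueq, hp12, nndist_self]
    rw [phi, hu0, jle_zero hMK]
    simp

theorem exists_delta {t₀ : ℝ≥0} {b : ℝ≥0∞} (h : (t₀ : ℝ≥0∞) < b) :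
    ∃ δ : ℝ≥0, 0 < δ ∧ ∀ s : ℝ≥0, s < t₀ + δ → (s : ℝ≥0∞) < b := by
  obtain ⟨c, hc1, hc2⟩ := ENNReal.lt_iff_exists_nnreal_btwn.1 h
  have hc1' : t₀ < c := by exact_mod_cast hc1
  refine ⟨c - t₀, tsub_pos_of_lt hc1', fun s hs => ?_⟩
  rw [add_tsub_cancel_of_le hc1'.le] at hs
  exact lt_trans (by exact_mod_cast hs) hc2

theorem psi_usc (hMK : MKnn T R) : ∀ t₀ : ℝ≥0, 0 < t₀ → ∀ ε : ℝ≥0, 0 < ε →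
    ∃ δ : ℝ≥0, 0 < δ ∧ ∀ s, t₀ ≤ s → s < t₀ + δ → psi hMK s < psi hMK t₀ + ε := by
  intro t₀ ht₀ ε hε
  have hεr : (0 : ℝ) < (ε : ℝ) := hε
  by_cases h1 : 0 < gamma T R t₀
  · by_cases h2 : (t₀ : ℝ≥0∞) < beta T R (gamma T R t₀)
    · -- attained case
      obtain ⟨δ, hδ, hwin⟩ := exists_delta h2
      refine ⟨δ, hδ, fun s hs1 hs2 => ?_⟩
      have hsb := hwin s hs2
      have hγs_le : gamma T R s ≤ gamma T R t₀ := gamma_le hMK h1 hsb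
      have key : psi hMK s ≤ psi hMK t₀ := by
        rcases eq_or_lt_of_le hγs_le with heq | hlt
        · have h1s : 0 < gamma T R s := by rw [heq]; exact h1
          have h2s : (s : ℝ≥0∞) < beta T R (gamma T R s) := by rw [heq]; exact hsb
          rw [← ENNReal.coe_le_coe, psi_coe_att hMK h1s h2s, psi_coe_att hMK h1 h2, heq]
        · rw [← ENNReal.coe_le_coe, psi_coe_att hMK h1 h2]
          refine le_trans (psi_le hMK s) ?_
          exact add_le_add (by exact_mod_cast hlt.le) (jle_le_jlt hMK hlt)
      exact lt_of_le_of_lt key (lt_add_of_pos_right _ hε)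
    · -- non-attained case
      have hε3 : (0 : ℝ≥0∞) < ((ε / 3 : ℝ≥0) : ℝ≥0∞) := by
        exact_mod_cast (show (0 : ℝ≥0) < ε / 3 by positivity)
      obtain ⟨η₀, hη₀, hrc⟩ := jle_rc hMK (gamma T R t₀) hε3
      have hηpos : 0 < min η₀ (ε / 3) := lt_min hη₀ (by positivity)
      have hb : (t₀ : ℝ≥0∞) < beta T R (gamma T R t₀ + min η₀ (ε / 3)) :=
        lt_beta_of_gamma_lt hMK (lt_add_of_pos_right _ hηpos)
      obtain ⟨δ, hδ, hwin⟩ := exists_delta hb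
      refine ⟨δ, hδ, fun s hs1 hs2 => ?_⟩
      have hγs : gamma T R s ≤ gamma T R t₀ + min η₀ (ε / 3) :=
        gamma_le hMK (lt_of_lt_of_le h1 le_self_add) (hwin s hs2)
      have hjle : jle hMK (gamma T R s) ≤ jle hMK (gamma T R t₀) + ((ε / 3 : ℝ≥0) : ℝ≥0∞) := by
        refine le_trans (jle_mono hMK hγs) ?_
        exact le_trans (jle_mono hMK (add_le_add le_rfl (min_le_left _ _))) hrc
      have hfin : (ε / 3 + ε / 3 : ℝ≥0) < ε := by
        rw [← NNReal.coe_lt_coe]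
        push_cast
        linarith
      have hchain : (psi hMK s : ℝ≥0∞) < ((psi hMK t₀ + ε : ℝ≥0) : ℝ≥0∞) := by
        calc (psi hMK s : ℝ≥0∞)
            ≤ (gamma T R s : ℝ≥0∞) + jle hMK (gamma T R s) := psi_le hMK s
          _ ≤ ((gamma T R t₀ : ℝ≥0∞) + ((min η₀ (ε / 3) : ℝ≥0) : ℝ≥0∞)) +
              (jle hMK (gamma T R t₀) + ((ε / 3 : ℝ≥0) : ℝ≥0∞)) :=
              add_le_add (by exact_mod_cast hγs) hjle
          _ = ((gamma T R t₀ : ℝ≥0∞) + jle hMK (gamma T R t₀)) +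
              (((min η₀ (ε / 3) : ℝ≥0) : ℝ≥0∞) + ((ε / 3 : ℝ≥0) : ℝ≥0∞)) := by ring
          _ ≤ (psi hMK t₀ : ℝ≥0∞) + (((ε / 3 : ℝ≥0) : ℝ≥0∞) + ((ε / 3 : ℝ≥0) : ℝ≥0∞)) := by
              rw [psi_coe_natt hMK h1 h2]
              refine add_le_add le_rfl (add_le_add ?_ le_rfl)
              exact_mod_cast min_le_right η₀ (ε / 3)
          _ < ((psi hMK t₀ + ε : ℝ≥0) : ℝ≥0∞) := by
              exact_mod_cast add_lt_add_right hfin (psi hMK t₀)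
      exact_mod_cast hchain
  · -- gamma t₀ = 0
    have hψ0 : psi hMK t₀ = 0 := psi_zero hMK h1
    have hγ0 : gamma T R t₀ = 0 := le_antisymm (not_lt.1 h1) (zero_le)
    have hε4 : (0 : ℝ≥0∞) < ((ε / 4 : ℝ≥0) : ℝ≥0∞) := by
      exact_mod_cast (show (0 : ℝ≥0) < ε / 4 by positivity)
    obtain ⟨η₀, hη₀, hrc⟩ := jle_rc hMK 0 hε4
    have hηpos : 0 < min η₀ (ε / 4) := lt_min hη₀ (by positivity)
    have hb : (t₀ : ℝ≥0∞) < beta T R (min η₀ (ε / 4)) :=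
      lt_beta_of_gamma_lt hMK (by rw [hγ0]; exact hηpos)
    obtain ⟨δ, hδ, hwin⟩ := exists_delta hb
    refine ⟨δ, hδ, fun s hs1 hs2 => ?_⟩
    have hγs : gamma T R s ≤ min η₀ (ε / 4) := gamma_le hMK hηpos (hwin s hs2)
    have hjle : jle hMK (gamma T R s) ≤ ((ε / 4 : ℝ≥0) : ℝ≥0∞) := by
      refine le_trans (jle_mono hMK (le_trans hγs (min_le_left _ _))) ?_
      have := hrc
      rw [zero_add, jle_zero hMK, zero_add] at this
      exact this
    have hfin : (ε / 4 + ε / 4 : ℝ≥0) < ε := by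
      rw [← NNReal.coe_lt_coe]
      push_cast
      linarith
    have hchain : (psi hMK s : ℝ≥0∞) < ((psi hMK t₀ + ε : ℝ≥0) : ℝ≥0∞) := by
      calc (psi hMK s : ℝ≥0∞)
          ≤ (gamma T R s : ℝ≥0∞) + jle hMK (gamma T R s) := psi_le hMK s
        _ ≤ ((ε / 4 : ℝ≥0) : ℝ≥0∞) + ((ε / 4 : ℝ≥0) : ℝ≥0∞) := by
            refine add_le_add ?_ hjle
            exact_mod_cast le_trans hγs (min_le_right _ _)
        _ < ((psi hMK t₀ + ε : ℝ≥0) : ℝ≥0∞) := by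
            rw [hψ0, zero_add, ← ENNReal.coe_add]
            exact_mod_cast hfin
    exact_mod_cast hchain

end MKAux

open MKAux

theorem MK_iff_phi_psi_metric {X : Type*} [MetricSpace X] (T : X → X)
    (R : Set (X × X)) (hR : R.Nonempty) :
    (∀ ε : ℝ, 0 < ε → ∃ δ : ℝ, 0 < δ ∧ ∀ p : X × X, p ∈ R →
        ε ≤ dist p.1 p.2 → dist p.1 p.2 < ε + δ → dist (T p.1) (T p.2) < ε) ↔
      (∃ (φ : ℝ≥0 → ℝ≥0∞) (ψ : ℝ≥0 → ℝ≥0), Monotone φ ∧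
        (∀ t₀ : ℝ≥0, 0 < t₀ → ∀ ε : ℝ≥0, 0 < ε →
          ∃ δ : ℝ≥0, 0 < δ ∧ ∀ s, t₀ ≤ s → s < t₀ + δ → ψ s < ψ t₀ + ε) ∧
        (∀ t : ℝ≥0, 0 < t → (ψ t : ℝ≥0∞) < φ t) ∧
        ∀ p : X × X, p ∈ R →
          φ (nndist (T p.1) (T p.2)) ≤ (ψ (nndist p.1 p.2) : ℝ≥0∞)) := by
  constructor
  · intro hMKr
    have hMK : MKnn T R := by
      intro ε hε
      obtain ⟨δ, hδ, h⟩ := hMKr ε (by exact_mod_cast hε)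
      refine ⟨δ.toNNReal, Real.toNNReal_pos.2 hδ, fun p hp h1 h2 => ?_⟩
      have h1' : (ε : ℝ) ≤ dist p.1 p.2 := by
        rw [← coe_nndist]; exact_mod_cast h1
      have h2' : dist p.1 p.2 < (ε : ℝ) + δ := by
        rw [← coe_nndist]
        calc (nndist p.1 p.2 : ℝ) < ((ε + δ.toNNReal : ℝ≥0) : ℝ) := by exact_mod_cast h2
          _ = (ε : ℝ) + max δ 0 := by push_cast [Real.coe_toNNReal']; ring
          _ = (ε : ℝ) + δ := by rw [max_eq_left hδ.le]
      have := h p hp h1' h2'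
      rw [← coe_nndist] at this
      exact_mod_cast this
    exact ⟨phi hMK, psi hMK, phi_mono hMK, psi_usc hMK,
      fun t ht => psi_lt_phi hMK ht, fun p hp => pair_cond hMK p hp⟩
  · rintro ⟨φ, ψ, hφmono, hψusc, hlt, hpair⟩ ε hε
    set ε' : ℝ≥0 := ε.toNNReal with hε'def
    have hε'pos : 0 < ε' := Real.toNNReal_pos.2 hε
    obtain ⟨κ, hκ, hκlt⟩ := ENNReal.lt_iff_exists_add_pos_lt.1 (hlt ε' hε'pos)
    obtain ⟨δ', hδ', husc⟩ := hψusc ε' hε'pos κ hκ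
    refine ⟨δ', by exact_mod_cast hδ', fun p hp h1 h2 => ?_⟩
    have hε'coe : (ε' : ℝ) = ε := Real.coe_toNNReal ε hε.le
    have hs1 : ε' ≤ nndist p.1 p.2 := by
      rw [← NNReal.coe_le_coe, hε'coe, coe_nndist]; exact h1
    have hs2 : nndist p.1 p.2 < ε' + δ' := by
      rw [← NNReal.coe_lt_coe, NNReal.coe_add, hε'coe, coe_nndist]; exact h2
    have hψs := husc (nndist p.1 p.2) hs1 hs2
    by_contra hcon
    push_neg at hcon
    have hu : ε' ≤ nndist (T p.1) (T p.2) := by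
      rw [← NNReal.coe_le_coe, hε'coe, coe_nndist]; exact hcon
    have : φ ε' ≤ (ψ (nndist p.1 p.2) : ℝ≥0∞) :=
      le_trans (hφmono hu) (hpair p hp)
    have : φ ε' < φ ε' := by
      calc φ ε' ≤ (ψ (nndist p.1 p.2) : ℝ≥0∞) := this
        _ < ((ψ ε' + κ : ℝ≥0) : ℝ≥0∞) := by exact_mod_cast hψs
        _ = (ψ ε' : ℝ≥0∞) + (κ : ℝ≥0∞) := by push_cast; rfl
        _ < φ ε' := hκlt
    exact lt_irrefl _ this
end

section
/- Let X be a metric space, T : X → X, x ∈ X, and x_n = Tⁿx. Suppose for every ε > 0 there exists δ > 0 such that n ∈ ℕ and ε ≤ d(x_n, x_{n+1}) < ε + δ imply d(x_{n+1}, x_{n+2}) < ε. Then the sequence {d(x_n, x_{n+1})} is nonincreasing and converges to 0. -/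
theorem dist_iterate_antitone_tendsto_zero {X : Type*} [MetricSpace X]
    (T : X → X) (x : X)
    (h : ∀ ε : ℝ, 0 < ε → ∃ δ : ℝ, 0 < δ ∧ ∀ n : ℕ,
      ε ≤ dist (T^[n] x) (T^[n + 1] x) → dist (T^[n] x) (T^[n + 1] x) < ε + δ →
        dist (T^[n + 1] x) (T^[n + 2] x) < ε) :
    Antitone (fun n : ℕ => dist (T^[n] x) (T^[n + 1] x)) ∧
      Filter.Tendsto (fun n : ℕ => dist (T^[n] x) (T^[n + 1] x))
        Filter.atTop (nhds 0) := by
  set a : ℕ → ℝ := fun n : ℕ => dist (T^[n] x) (T^[n + 1] x) with ha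
  have hanti : Antitone a := by
    apply antitone_nat_of_succ_le
    intro n
    rcases eq_or_lt_of_le (dist_nonneg : (0:ℝ) ≤ a n) with h0 | hpos
    · have he : T^[n] x = T^[n + 1] x := by
        have := h0.symm
        simpa [ha, dist_eq_zero] using this
      have : T^[n + 1] x = T^[n + 2] x := by
        have := congrArg T he
        simpa [← Function.iterate_succ_apply' T] using this
      show a (n + 1) ≤ a n
      have : a (n + 1) = 0 := by simp [ha, dist_eq_zero, this]
      rw [this]; exact dist_nonneg
    · obtain ⟨δ, hδ, hδ2⟩ := h (a n) hpos
      exact le_of_lt (hδ2 n le_rfl (by linarith))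
  have hbdd : BddBelow (Set.range a) := ⟨0, by rintro y ⟨n, rfl⟩; exact dist_nonneg⟩
  have htend : Filter.Tendsto a Filter.atTop (nhds (⨅ n, a n)) :=
    tendsto_atTop_ciInf hanti hbdd
  have hL0 : 0 ≤ ⨅ n, a n := le_ciInf fun n => dist_nonneg
  have hL : (⨅ n, a n) = 0 := by
    by_contra hne
    have hLpos : 0 < ⨅ n, a n := lt_of_le_of_ne hL0 (Ne.symm hne)
    obtain ⟨δ, hδ, hδ2⟩ := h _ hLpos
    have : (⨅ n, a n) < (⨅ n, a n) + δ := by linarith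
    obtain ⟨n, hn⟩ := exists_lt_of_ciInf_lt this
    have h1 : (⨅ n, a n) ≤ a n := ciInf_le hbdd n
    have h2 : a (n + 1) < ⨅ n, a n := hδ2 n h1 hn
    exact absurd (ciInf_le hbdd (n + 1)) (not_le.mpr h2)
  exact ⟨hanti, hL ▸ htend⟩
end

section
/- Let X be a metric space, {x_n} a sequence in X, l < m positive integers, and 0 < η ≤ ε. Suppose d(x_l, x_m) ≥ 2ε and d(x_i, x_{i+1}) < η/3 for all i with l ≤ i ≤ m. Then there exists j with l < j < m and ε + 2η/3 ≤ d(x_l, x_j) < ε + η. -/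
theorem pre_cauchy_lemma {X : Type*} [MetricSpace X] (x : ℕ → X)
    (l m : ℕ) (hl : 0 < l) (hlm : l < m) (ε η : ℝ) (hε : 0 < ε) (hη : 0 < η)
    (hηε : η ≤ ε) (hbig : 2 * ε ≤ dist (x l) (x m))
    (hsmall : ∀ i : ℕ, l ≤ i → i ≤ m → dist (x i) (x (i + 1)) < η / 3) :
    ∃ j : ℕ, l < j ∧ j < m ∧ ε + 2 * η / 3 ≤ dist (x l) (x j) ∧
      dist (x l) (x j) < ε + η := by
  classical
  have hPm : l < m ∧ ε + 2 * η / 3 ≤ dist (x l) (x m) := ⟨hlm, by linarith⟩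
  set P : ℕ → Prop := fun j => l < j ∧ ε + 2 * η / 3 ≤ dist (x l) (x j) with hP
  have hex : ∃ j, P j := ⟨m, hPm⟩
  set j := Nat.find hex with hj
  have hspec : P j := Nat.find_spec hex
  have hjm : j ≤ m := Nat.find_le hPm
  have hlj : l < j := hspec.1
  -- previous index
  have hprev : dist (x l) (x (j - 1)) < ε + 2 * η / 3 := by
    rcases eq_or_lt_of_le (Nat.succ_le_of_lt hlj) with h | h
    · have : j - 1 = l := by omega
      rw [this]
      simp only [dist_self]
      positivity
    · have hlt : j - 1 < j := by omega
      have hnp : ¬ P (j - 1) := Nat.find_min hex hlt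
      simp only [hP] at hnp
      push_neg at hnp
      exact hnp (by omega)
  have hstep : dist (x (j - 1)) (x j) < η / 3 := by
    have := hsmall (j - 1) (by omega) (by omega)
    have h1 : j - 1 + 1 = j := by omega
    rwa [h1] at this
  have hupper : dist (x l) (x j) < ε + η := by
    have := dist_triangle (x l) (x (j - 1)) (x j)
    linarith
  have hjmne : j < m := by
    rcases eq_or_lt_of_le hjm with h | h
    · exfalso
      rw [h] at hupper
      linarith
    · exact h
  exact ⟨j, hlj, hjmne, hspec.2, hupper⟩
end

section
/- Let X be a metric space, T : X → X, x ∈ X, and x_n = Tⁿx. Suppose for every ε > 0 there exists δ > 0 such that i, j ∈ ℕ and ε ≤ d(x_i, x_j) < ε + δ imply d(x_{i+1}, x_{j+1}) < ε. Then {x_n} is a Cauchy sequence. -/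
theorem iterate_cauchySeq {X : Type*} [MetricSpace X] (T : X → X) (x : X)
    (h : ∀ ε : ℝ, 0 < ε → ∃ δ : ℝ, 0 < δ ∧ ∀ i j : ℕ,
      ε ≤ dist (T^[i] x) (T^[j] x) → dist (T^[i] x) (T^[j] x) < ε + δ →
        dist (T^[i + 1] x) (T^[j + 1] x) < ε) :
    CauchySeq (fun n : ℕ => T^[n] x) := by
  set a : ℕ → ℝ := fun n => dist (T^[n] x) (T^[n + 1] x) with ha
  have hstep : ∀ n, a (n + 1) ≤ a n := by
    intro n
    rcases eq_or_lt_of_le (dist_nonneg : 0 ≤ a n) with h0 | h0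
    · have hx : T^[n] x = T^[n + 1] x := by
        have : dist (T^[n] x) (T^[n + 1] x) = 0 := h0.symm
        exact dist_eq_zero.mp this
      have hx2 : T^[n + 1] x = T^[n + 1 + 1] x := by
        have := congrArg T hx
        simpa [Function.iterate_succ_apply'] using this
      simp only [ha]
      rw [← hx2, hx2, dist_self]
      exact dist_nonneg
    · obtain ⟨δ, hδ, hδ2⟩ := h (a n) h0
      exact (hδ2 n (n + 1) le_rfl (lt_add_of_pos_right _ hδ)).le
  have hanti : Antitone a := antitone_nat_of_succ_le hstep
  have hbdd : BddBelow (Set.range a) := ⟨0, by rintro _ ⟨n, rfl⟩; exact dist_nonneg⟩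
  have hsmall : ∀ ε : ℝ, 0 < ε → ∃ N, a N < ε := by
    intro ε hε
    by_contra hc
    push_neg at hc
    set r := ⨅ n, a n with hr
    have hrε : ε ≤ r := le_ciInf hc
    obtain ⟨δ, hδ, hδ2⟩ := h r (hε.trans_le hrε)
    obtain ⟨n, hn⟩ := exists_lt_of_ciInf_lt (show r < r + δ from lt_add_of_pos_right _ hδ)
    have h1 : r ≤ a n := ciInf_le hbdd n
    have h2 := hδ2 n (n + 1) h1 hn
    exact absurd (ciInf_le hbdd (n + 1)) (not_le.mpr h2)
  rw [Metric.cauchySeq_iff]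
  intro ε hε
  have hε' : 0 < ε / 4 := by linarith
  obtain ⟨δ0, hδ0, hδ0'⟩ := h (ε / 4) hε'
  set δ := min δ0 (ε / 4) with hδdef
  have hδ : 0 < δ := lt_min hδ0 hε'
  obtain ⟨N, hN⟩ := hsmall δ hδ
  have haN : ∀ m, N ≤ m → dist (T^[m] x) (T^[m + 1] x) < δ :=
    fun m hm => lt_of_le_of_lt (hanti hm) hN
  have key : ∀ k, dist (T^[N] x) (T^[N + k] x) < ε / 4 + δ := by
    intro k
    induction k with
    | zero =>
      simp only [Nat.add_zero, dist_self]
      positivity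
    | succ k ih =>
      rcases lt_or_ge (dist (T^[N] x) (T^[N + k] x)) (ε / 4) with hc | hc
      · have h1 : dist (T^[N] x) (T^[N + (k + 1)] x)
            ≤ dist (T^[N] x) (T^[N + k] x) + dist (T^[N + k] x) (T^[N + k + 1] x) := by
          rw [show N + (k + 1) = N + k + 1 from rfl]
          exact dist_triangle _ _ _
        have h2 := haN (N + k) (Nat.le_add_right _ _)
        linarith
      · have hlt : dist (T^[N] x) (T^[N + k] x) < ε / 4 + δ0 :=
          lt_of_lt_of_le ih (by have := min_le_left δ0 (ε / 4); linarith)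
        have h2 := hδ0' N (N + k) hc hlt
        have h1 : dist (T^[N] x) (T^[N + (k + 1)] x)
            ≤ dist (T^[N] x) (T^[N + 1] x) + dist (T^[N + 1] x) (T^[N + k + 1] x) := by
          rw [show N + (k + 1) = N + k + 1 from rfl]
          exact dist_triangle _ _ _
        have h3 := haN N le_rfl
        linarith
  refine ⟨N, fun m hm n hn => ?_⟩
  have hm' := key (m - N)
  have hn' := key (n - N)
  rw [Nat.add_sub_cancel' hm] at hm'
  rw [Nat.add_sub_cancel' hn] at hn'
  have hδle : δ ≤ ε / 4 := min_le_right _ _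
  have htri : dist (T^[m] x) (T^[n] x)
      ≤ dist (T^[N] x) (T^[m] x) + dist (T^[N] x) (T^[n] x) := by
    rw [dist_comm (T^[N] x) (T^[m] x)]
    exact dist_triangle _ _ _
  linarith
end

section
/- Let X be a complete metric space, T : X → X, and R ⊆ X × X nonempty. Suppose: (1) R is transitive; (2) there exists x ∈ X with (x, Tx) ∈ R; (3) (Tu, Tv) ∈ R for all (u,v) ∈ R; (4) for every ε > 0 there exists δ > 0 such that (u,v) ∈ R and ε ≤ d(u,v) < ε+δ imply d(Tu,Tv) < ε; (5) whenever a sequence {x_n} in X satisfies x_n → y and (x_n, x_{n+1}) ∈ R for all n, some subsequence {x_{n_k}} satisfies Tx_{n_k} → Ty. Then {Tⁿx} converges to a fixed point of T. -/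
theorem fixed_point_of_MK_relation {X : Type*} [MetricSpace X] [CompleteSpace X]
    (T : X → X) (R : Set (X × X)) (hR : R.Nonempty)
    (htrans : ∀ u v w : X, (u, v) ∈ R → (v, w) ∈ R → (u, w) ∈ R)
    (x : X) (hx : (x, T x) ∈ R)
    (hT : ∀ u v : X, (u, v) ∈ R → (T u, T v) ∈ R)
    (hMK : ∀ ε : ℝ, 0 < ε → ∃ δ : ℝ, 0 < δ ∧ ∀ u v : X, (u, v) ∈ R →
      ε ≤ dist u v → dist u v < ε + δ → dist (T u) (T v) < ε)
    (hcont : ∀ (s : ℕ → X) (y : X), Filter.Tendsto s Filter.atTop (nhds y) →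
      (∀ n : ℕ, (s n, s (n + 1)) ∈ R) →
      ∃ φ : ℕ → ℕ, StrictMono φ ∧
        Filter.Tendsto (fun k => T (s (φ k))) Filter.atTop (nhds (T y))) :
    ∃ z : X, Filter.Tendsto (fun n : ℕ => T^[n] x) Filter.atTop (nhds z) ∧
      T z = z := by
  set s : ℕ → X := fun n => T^[n] x with hs_def
  have hsucc : ∀ n, s (n + 1) = T (s n) := fun n => Function.iterate_succ_apply' T n x
  have hs : ∀ n, (s n, s (n + 1)) ∈ R := by
    intro n
    induction n with
    | zero => simpa [hs_def] using hx
    | succ n ih =>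
      rw [hsucc (n + 1), hsucc n]
      rw [hsucc n] at ih
      exact hT _ _ ih
  have hpair : ∀ n m, n < m → (s n, s m) ∈ R := by
    intro n m hlt
    induction m with
    | zero => omega
    | succ m ih =>
      rcases Nat.lt_succ_iff_lt_or_eq.mp hlt with h | h
      · exact htrans _ _ _ (ih h) (hs m)
      · subst h; exact hs n
  have hlt' : ∀ u v : X, (u, v) ∈ R → 0 < dist u v → dist (T u) (T v) < dist u v := by
    intro u v huv hd
    obtain ⟨δ, hδ, h⟩ := hMK (dist u v) hd
    exact h u v huv le_rfl (by linarith)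
  have hle : ∀ u v : X, (u, v) ∈ R → dist (T u) (T v) ≤ dist u v := by
    intro u v huv
    rcases eq_or_lt_of_le (dist_nonneg : (0:ℝ) ≤ dist u v) with h | h
    · have huv' : u = v := by rw [← dist_le_zero]; linarith
      simp [huv']
    · exact (hlt' u v huv h).le
  -- distances between consecutive iterates
  set a : ℕ → ℝ := fun n => dist (s n) (s (n + 1)) with ha_def
  have hstep : ∀ n, a (n + 1) ≤ a n := by
    intro n
    have h := hle _ _ (hs n)
    show dist (s (n + 1)) (s (n + 1 + 1)) ≤ dist (s n) (s (n + 1))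
    rw [hsucc n] at h
    rw [hsucc (n + 1), hsucc n]
    exact h
  have hA : Antitone a := antitone_nat_of_succ_le hstep
  have hbdd : BddBelow (Set.range a) := ⟨0, by rintro _ ⟨n, rfl⟩; exact dist_nonneg⟩
  have htend_inf : Filter.Tendsto a Filter.atTop (nhds (⨅ n, a n)) :=
    tendsto_atTop_ciInf hA hbdd
  have hinf_nonneg : 0 ≤ ⨅ n, a n := le_ciInf fun n => dist_nonneg
  have hinf_zero : (⨅ n, a n) = 0 := by
    by_contra hne
    have hr : 0 < ⨅ n, a n := lt_of_le_of_ne hinf_nonneg (Ne.symm hne)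
    obtain ⟨δ, hδ, hM⟩ := hMK (⨅ n, a n) hr
    obtain ⟨n, hn⟩ := (htend_inf.eventually_lt_const (by linarith : (⨅ n, a n) < (⨅ n, a n) + δ)).exists
    have h1 : (⨅ n, a n) ≤ a n := ciInf_le hbdd n
    have h2 : dist (T (s n)) (T (s (n + 1))) < ⨅ n, a n := hM _ _ (hs n) h1 hn
    have h3 : (⨅ n, a n) ≤ a (n + 1) := ciInf_le hbdd (n + 1)
    have h4 : a (n + 1) = dist (T (s n)) (T (s (n + 1))) := by
      show dist (s (n + 1)) (s (n + 1 + 1)) = _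
      rw [hsucc (n + 1), hsucc n]
    linarith [h4 ▸ h3]
  have ha0 : Filter.Tendsto a Filter.atTop (nhds 0) := hinf_zero ▸ htend_inf
  -- Cauchy
  have hcauchy : CauchySeq s := by
    rw [Metric.cauchySeq_iff']
    intro ε hε
    obtain ⟨δ0, hδ0, hM⟩ := hMK (ε / 2) (by linarith)
    set δ : ℝ := min δ0 (ε / 2) with hδdef
    have hδ : 0 < δ := lt_min hδ0 (by linarith)
    obtain ⟨N, hN⟩ := (ha0.eventually_lt_const hδ).exists
    have hN' : dist (s N) (s (N + 1)) < δ := hN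
    refine ⟨N, ?_⟩
    have key : ∀ m : ℕ, dist (s N) (s (N + m + 1)) < ε / 2 + δ := by
      intro m
      induction m with
      | zero =>
        show dist (s N) (s (N + 1)) < ε / 2 + δ
        linarith
      | succ m ih =>
        have hmem : (s N, s (N + m + 1)) ∈ R := hpair N (N + m + 1) (by omega)
        have h2 : dist (s (N + 1)) (s (N + m + 2)) < ε / 2 := by
          have heq1 : s (N + 1) = T (s N) := hsucc N
          have heq2 : s (N + m + 2) = T (s (N + m + 1)) := hsucc (N + m + 1)
          rw [heq1, heq2]
          rcases lt_or_ge (dist (s N) (s (N + m + 1))) (ε / 2) with h | h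
          · exact (hle _ _ hmem).trans_lt h
          · have hδδ0 : δ ≤ δ0 := min_le_left _ _
            exact hM _ _ hmem h (by linarith)
        calc dist (s N) (s (N + (m + 1) + 1))
            ≤ dist (s N) (s (N + 1)) + dist (s (N + 1)) (s (N + m + 2)) :=
              dist_triangle _ _ _
          _ < δ + ε / 2 := by exact add_lt_add hN' h2
          _ = ε / 2 + δ := by ring
    intro n hn
    rcases eq_or_lt_of_le hn with h | h
    · rw [← h]; simpa using hε
    · obtain ⟨m, rfl⟩ : ∃ m, n = N + m + 1 := ⟨n - N - 1, by omega⟩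
      have hδε : δ ≤ ε / 2 := min_le_right _ _
      rw [dist_comm]
      linarith [key m]
  obtain ⟨z, hz⟩ := cauchySeq_tendsto_of_complete hcauchy
  obtain ⟨φ, hφ, htend⟩ := hcont s z hz hs
  have h1 : Filter.Tendsto (fun k => T (s (φ k))) Filter.atTop (nhds z) := by
    have heq : (fun k => T (s (φ k))) = fun k => s (φ k + 1) := by
      funext k; exact (hsucc (φ k)).symm
    rw [heq]
    have hφ1 : Filter.Tendsto (fun k => φ k + 1) Filter.atTop Filter.atTop :=
      (hφ.add_const 1).tendsto_atTop
    exact hz.comp hφ1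
  exact ⟨z, hz, tendsto_nhds_unique htend h1⟩
end

section
/- Let X be a complete metric space, T : X → X, and ⪯ a partial order on X. Suppose: (NR1) there exists x ∈ X with x ⪯ Tx; (NR2) u ⪯ v implies Tu ⪯ Tv; (NR3) there exists θ ∈ [0,1) such that d(Tu,Tv) ≤ θ·d(u,v) whenever u ⪯ v; (NR4) if x_n → y and x_n ⪯ x_{n+1} for all n, then x_n ⪯ y for all n. Then T has a fixed point. -/
theorem nieto_rodriguez_lopez {X : Type*} [MetricSpace X] [CompleteSpace X]
    [PartialOrder X] (T : X → X)
    (hNR1 : ∃ x : X, x ≤ T x)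
    (hNR2 : ∀ u v : X, u ≤ v → T u ≤ T v)
    (hNR3 : ∃ θ : ℝ, 0 ≤ θ ∧ θ < 1 ∧ ∀ u v : X, u ≤ v →
      dist (T u) (T v) ≤ θ * dist u v)
    (hNR4 : ∀ (s : ℕ → X) (y : X), Filter.Tendsto s Filter.atTop (nhds y) →
      (∀ n : ℕ, s n ≤ s (n + 1)) → ∀ n : ℕ, s n ≤ y) :
    ∃ z : X, T z = z := by
  obtain ⟨x₀, hx₀⟩ := hNR1
  obtain ⟨θ, hθ0, hθ1, hθ⟩ := hNR3
  set s : ℕ → X := fun n => T^[n] x₀ with hs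
  have hsucc : ∀ n, s (n + 1) = T (s n) := by
    intro n; simp [hs, Function.iterate_succ_apply']
  have hmono : ∀ n, s n ≤ s (n + 1) := by
    intro n
    induction n with
    | zero => simpa [hs] using hx₀
    | succ k ih => rw [hsucc, hsucc]; exact hNR2 _ _ ih
  have hdist : ∀ n, dist (s n) (s (n + 1)) ≤ dist x₀ (T x₀) * θ ^ n := by
    intro n
    induction n with
    | zero => simp [hs]
    | succ k ih =>
      rw [hsucc, hsucc]
      calc dist (T (s k)) (T (s (k + 1))) ≤ θ * dist (s k) (s (k + 1)) :=
            hθ _ _ (hmono k)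
        _ ≤ θ * (dist x₀ (T x₀) * θ ^ k) := by
            exact mul_le_mul_of_nonneg_left ih hθ0
        _ = dist x₀ (T x₀) * θ ^ (k + 1) := by ring
  have hcauchy : CauchySeq s := cauchySeq_of_le_geometric θ _ hθ1 hdist
  obtain ⟨z, hz⟩ := cauchySeq_tendsto_of_complete hcauchy
  refine ⟨z, ?_⟩
  have hle : ∀ n, s n ≤ z := hNR4 s z hz hmono
  have h1 : Filter.Tendsto (fun n => T (s n)) Filter.atTop (nhds (T z)) := by
    rw [tendsto_iff_dist_tendsto_zero]
    have h0 : Filter.Tendsto (fun n => θ * dist (s n) z) Filter.atTop (nhds 0) := by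
      have := (tendsto_iff_dist_tendsto_zero.mp hz).const_mul θ
      simpa using this
    refine squeeze_zero (fun n => dist_nonneg) (fun n => hθ _ _ (hle n)) h0
  have h2 : Filter.Tendsto (fun n => T (s n)) Filter.atTop (nhds z) := by
    have := hz.comp (Filter.tendsto_add_atTop_nat 1)
    have heq : (fun n => T (s n)) = s ∘ (fun n => n + 1) := by
      funext n; simp [Function.comp, hsucc]
    rw [heq]; exact this
  exact tendsto_nhds_unique h1 h2
end
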